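/- arXiv:1308.2677 — 4 statements merged into one kernel-verified Lean document; each statement's English description precedes it below -/
import Mathlib

section
/- Rotor-routing preserves unicycles: if (ρ, v) is a unicycle on a ribbon graph G (ρ a rotor configuration with exactly one directed cycle C(ρ), and v a vertex on C(ρ)), then applying one step of the rotor-routing process yields another unicycle. -/
/-- A ribbon graph: a finite connected multigraph without self-loops, presented
by darts (directed half-edges), together with a cyclic ordering `next` of the
darts based at each vertex. -/
structure RibbonGraph where
  V : Type
  D : Type
  fV : Fintype V
  dV : DecidableEq V
  fD : Fintype D
  dD : DecidableEq D
  nV : Nonempty V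
  src : D → V
  rev : D → D
  rev_rev : ∀ d, rev (rev d) = d
  no_loop : ∀ d, src (rev d) ≠ src d
  next : Equiv.Perm D
  src_next : ∀ d, src (next d) = src d
  next_cyclic : ∀ d e, src d = src e → ∃ n : ℕ, (⇑next)^[n] d = e
  conn : ∀ u v : V,
    Relation.ReflTransGen (fun a b => ∃ d, src d = a ∧ src (rev d) = b) u v

attribute [instance] RibbonGraph.fV RibbonGraph.dV RibbonGraph.fD RibbonGraph.dD

namespace RibbonGraph

variable (G : RibbonGraph)

/-- The endpoint of a dart. -/
def tgt (d : G.D) : G.V := G.src (G.rev d)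

/-- A rotor configuration: an outgoing dart at every vertex. -/
def RotorConfig := {ρ : G.V → G.D // ∀ v, G.src (ρ v) = v}

/-- One step of the rotor-routing process: advance the rotor at the chip's
position to the next dart in the cyclic order, then move the chip along it. -/
def rrStep (p : G.RotorConfig × G.V) : G.RotorConfig × G.V :=
  (⟨fun v => if v = p.2 then G.next (p.1.1 p.2) else p.1.1 v, by
      intro v
      simp only []
      by_cases h : v = p.2
      · rw [if_pos h, G.src_next, p.1.2, h]
      · rw [if_neg h]
        exact p.1.2 v⟩,
    G.tgt (G.next (p.1.1 p.2)))

/-- The functional graph of a rotor configuration: follow the rotor. -/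
def cfgStep (ρ : G.RotorConfig) (v : G.V) : G.V := G.tgt (ρ.1 v)

/-- A vertex is periodic (lies on a directed cycle of the rotor configuration). -/
def Periodic (ρ : G.RotorConfig) (v : G.V) : Prop :=
  ∃ n : ℕ, 0 < n ∧ (G.cfgStep ρ)^[n] v = v

/-- A unicycle: a rotor configuration with exactly one directed cycle, together
with a chip position on that cycle. -/
def Unicycle (p : G.RotorConfig × G.V) : Prop :=
  G.Periodic p.1 p.2 ∧
    ∀ u w, G.Periodic p.1 u → G.Periodic p.1 w → ∃ n : ℕ, (G.cfgStep p.1)^[n] u = w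

/-- `(σ, y)` is reachable from `(ρ, x)` by a positive number of rotor-routing steps. -/
def Reaches (p q : G.RotorConfig × G.V) : Prop :=
  ∃ n : ℕ, 0 < n ∧ (G.rrStep)^[n] p = q

/-- `σ` is obtained from `ρ` by reversing the directed cycle(s) of `ρ` and keeping
all other rotors: off the cycle the rotors agree, and the rotor of `σ` at the head
of a cycle dart of `ρ` is that dart reversed. -/
def IsReversal (ρ σ : G.RotorConfig) : Prop :=
  (∀ v, ¬ G.Periodic ρ v → σ.1 v = ρ.1 v) ∧
  (∀ v, G.Periodic ρ v → σ.1 (G.tgt (ρ.1 v)) = G.rev (ρ.1 v))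

/-- Two rotor configurations have the same directed cycle. -/
def SameCycle (ρ τ : G.RotorConfig) : Prop :=
  ∀ v, (G.Periodic ρ v ↔ G.Periodic τ v) ∧ (G.Periodic ρ v → ρ.1 v = τ.1 v)

/-- The directed cycle of `ρ` is reversible: from any unicycle whose rotor
configuration has the same directed cycle, the reversed state is reachable. -/
def CycleReversible (ρ : G.RotorConfig) : Prop :=
  ∀ τ v σ, G.SameCycle ρ τ → G.Periodic τ v → G.IsReversal τ σ →
    G.Reaches (τ, v) (σ, v)

/-- A directed cycle in a ribbon graph: a cyclically closed, vertex-injective,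
nonempty list of darts. -/
structure DirCycle where
  darts : List G.D
  ne : darts ≠ []
  chain : darts.Chain' (fun a b => G.tgt a = G.src b)
  wrap : G.tgt (darts.getLast ne) = G.src (darts.head ne)
  nodupV : (darts.map G.src).Nodup

/-- The vertices of a directed cycle. -/
def cverts (C : G.DirCycle) : List G.V := C.darts.map G.src

/-- A dart `e` based at a vertex of `C` lies on the right of `C`: it occurs
strictly after the outgoing dart of `C` and strictly before the reversed
incoming dart of `C` in the cyclic order at its base vertex. -/
def RightOf (C : G.DirCycle) (e : G.D) : Prop :=
  ∃ dout ∈ C.darts, ∃ din ∈ C.darts,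
    G.src dout = G.src e ∧ G.tgt din = G.src e ∧
    ∃ k j : ℕ, 0 < k ∧ k < j ∧ (⇑G.next)^[k] dout = e ∧ (⇑G.next)^[j] dout = G.rev din ∧
      ∀ j', 0 < j' → j' < j → (⇑G.next)^[j'] dout ≠ G.rev din

/-- A dart `e` based at a vertex of `C` lies on the left of `C`: it occurs
strictly after the reversed incoming dart of `C` and strictly before the
outgoing dart of `C` in the cyclic order at its base vertex. -/
def LeftOf (C : G.DirCycle) (e : G.D) : Prop :=
  ∃ dout ∈ C.darts, ∃ din ∈ C.darts,
    G.src dout = G.src e ∧ G.tgt din = G.src e ∧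
    ∃ k j : ℕ, 0 < k ∧ k < j ∧ (⇑G.next)^[k] (G.rev din) = e ∧ (⇑G.next)^[j] (G.rev din) = dout ∧
      ∀ j', 0 < j' → j' < j → (⇑G.next)^[j'] (G.rev din) ≠ dout

/-- A path witnessing that the cycle `C` is nonseparating: an edge-injective path
whose endpoints lie on `C`, which is otherwise disjoint from `C`, whose first
edge is on the left of `C` and whose last edge is on the right of `C`. -/
def IsWitness (C : G.DirCycle) (p : List G.D) : Prop :=
  ∃ hp : p ≠ [],
    p.Chain' (fun a b => G.tgt a = G.src b) ∧
    G.src (p.head hp) ∈ G.cverts C ∧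
    G.tgt (p.getLast hp) ∈ G.cverts C ∧
    (∀ i : Fin p.length, i.1 ≠ 0 → G.src (p.get i) ∉ G.cverts C) ∧
    (∀ i j : Fin p.length, i ≠ j → p.get i ≠ p.get j ∧ p.get i ≠ G.rev (p.get j)) ∧
    G.LeftOf C (p.head hp) ∧
    G.RightOf C (G.rev (p.getLast hp))

/-- The cycle `C` is separating (no witness to the contrary exists). -/
def Separating (C : G.DirCycle) : Prop := ∀ p : List G.D, ¬ G.IsWitness C p

/-- The ribbon graph is planar: every cycle is separating. -/
def Planar : Prop := ∀ C : G.DirCycle, G.Separating C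

/-- `C` is the unique directed cycle of the rotor configuration `ρ`. -/
def IsCycleOf (ρ : G.RotorConfig) (C : G.DirCycle) : Prop :=
  (∀ d ∈ C.darts, ρ.1 (G.src d) = d) ∧ (∀ v, G.Periodic ρ v → v ∈ G.cverts C)

/-- The cycle `C` is reversible: from any unicycle whose unique directed cycle is
`C` and whose chip lies on `C`, the state with `C` reversed is reachable by
rotor-routing. -/
def Reversible (C : G.DirCycle) : Prop :=
  ∀ (ρ : G.RotorConfig) (v : G.V) (σ : G.RotorConfig),
    G.IsCycleOf ρ C → v ∈ G.cverts C → G.IsReversal ρ σ → G.Reaches (ρ, v) (σ, v)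

/-- A spanning tree of a ribbon graph: a `rev`-closed set of darts that connects
all vertices and has the dart count of a tree. -/
structure SpanningTree where
  edges : Finset G.D
  rev_mem : ∀ d ∈ edges, G.rev d ∈ edges
  conn : ∀ u v : G.V,
    Relation.ReflTransGen (fun a b => ∃ d ∈ edges, G.src d = a ∧ G.tgt d = b) u v
  card_eq : edges.card = 2 * (Fintype.card G.V - 1)

/-- `ρ` orients the spanning tree `T` toward the root `r`: away from `r` the
rotors are tree darts, and following the rotors from any vertex reaches `r`. -/
def TowardRoot (T : G.SpanningTree) (r : G.V) (ρ : G.RotorConfig) : Prop :=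
  (∀ v, v ≠ r → ρ.1 v ∈ T.edges) ∧ (∀ v, ∃ n : ℕ, (G.cfgStep ρ)^[n] v = r)

/-- The rotor-routing action of the divisor `v - r` with basepoint `r` sends the
spanning tree `T` to `T'`: orient `T` toward `r`, place the chip at `v`, iterate
rotor-routing until the chip first reaches `r`, and read off the resulting
spanning tree oriented toward `r`.  (The rotor at `r` itself is irrelevant: the
chip is never routed from `r`.) -/
def RRAct (r v : G.V) (T T' : G.SpanningTree) : Prop :=
  ∃ ρ : G.RotorConfig, G.TowardRoot T r ρ ∧
    ∃ n : ℕ, (∀ k, k < n → ((G.rrStep)^[k] (ρ, v)).2 ≠ r) ∧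
      ((G.rrStep)^[n] (ρ, v)).2 = r ∧
      G.TowardRoot T' r ((G.rrStep)^[n] (ρ, v)).1

/-- The divisor `v - r` as a function on vertices. -/
def genDiv (v r : G.V) : G.V → ℤ :=
  fun w => (if w = v then (1 : ℤ) else 0) - (if w = r then 1 else 0)

/-- The rotor-routing action of an arbitrary divisor `D ∈ Div⁰(G)` with basepoint
`r` on spanning trees, generated by the actions of the divisors `v - r` and
their inverses. -/
inductive DivAct (r : G.V) : (G.V → ℤ) → G.SpanningTree → G.SpanningTree → Prop
  | zero (T : G.SpanningTree) : DivAct r 0 T T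
  | step (v : G.V) (D : G.V → ℤ) (T T' T'' : G.SpanningTree) :
      DivAct r D T T' → G.RRAct r v T' T'' → DivAct r (D + G.genDiv v r) T T''
  | inv (v : G.V) (D : G.V → ℤ) (T T' T'' : G.SpanningTree) :
      DivAct r D T T' → G.RRAct r v T'' T' → DivAct r (D - G.genDiv v r) T T''

end RibbonGraph

/-- one step of the rotor-routing process takes unicycles to unicycles. -/
theorem rrStep_unicycle (G : RibbonGraph) (p : G.RotorConfig × G.V)
    (hp : G.Unicycle p) : G.Unicycle (G.rrStep p) := by
  classical
  obtain ⟨hper, huni⟩ := hp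
  set ρ := p.1 with hρ
  set x := p.2 with hx
  set f := G.cfgStep ρ with hf
  set q := G.rrStep p with hq
  set f' := G.cfgStep q.1 with hf'
  have hq2 : q.2 = G.tgt (G.next (ρ.1 x)) := rfl
  have hfx : f' x = q.2 := by
    simp [hf', RibbonGraph.cfgStep, hq, RibbonGraph.rrStep, hq2, hx]
  have hne : ∀ v, v ≠ x → f' v = f v := by
    intro v hv
    simp [hf', hf, RibbonGraph.cfgStep, hq, RibbonGraph.rrStep, hv, show v ≠ p.2 from hv, hρ]
  -- every vertex reaches x under the old rotor configuration
  have reach : ∀ v, ∃ n, f^[n] v = x := by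
    intro v
    obtain ⟨a, b, hab, heq⟩ : ∃ a b : ℕ, a < b ∧ f^[a] v = f^[b] v := by
      obtain ⟨a, b, hne', heq⟩ :=
        Finite.exists_ne_map_eq_of_infinite (fun n : ℕ => f^[n] v)
      rcases lt_or_gt_of_ne hne' with h | h
      · exact ⟨a, b, h, heq⟩
      · exact ⟨b, a, h, heq.symm⟩
    have hperu : G.Periodic ρ (f^[a] v) := by
      refine ⟨b - a, Nat.sub_pos_of_lt hab, ?_⟩
      show f^[b - a] (f^[a] v) = f^[a] v
      rw [← Function.iterate_add_apply, Nat.sub_add_cancel hab.le, ← heq]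
    obtain ⟨n, hn⟩ := huni (f^[a] v) x hperu hper
    exact ⟨n + a, by rw [Function.iterate_add_apply]; exact hn⟩
  -- every vertex reaches x under the new rotor configuration
  have reach' : ∀ v, ∃ m, f'^[m] v = x := by
    have key : ∀ n, ∀ v, f^[n] v = x → ∃ m, f'^[m] v = x := by
      intro n
      induction n with
      | zero => intro v h; exact ⟨0, h⟩
      | succ n ih =>
        intro v h
        by_cases hv : v = x
        · exact ⟨0, hv⟩
        · rw [Function.iterate_succ_apply] at h
          obtain ⟨m, hm⟩ := ih (f v) h
          refine ⟨m + 1, ?_⟩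
          rw [Function.iterate_add_apply]
          simpa [hne v hv] using hm
    intro v
    obtain ⟨n, hn⟩ := reach v
    exact key n v hn
  obtain ⟨m, hm⟩ := reach' q.2
  have hxper : G.Periodic q.1 x := by
    refine ⟨m + 1, Nat.succ_pos m, ?_⟩
    show f'^[m + 1] x = x
    rw [Function.iterate_succ_apply, hfx]
    exact hm
  have hyper : G.Periodic q.1 q.2 := by
    obtain ⟨n, hn, hnx⟩ := hxper
    have hnx' : f'^[n] x = x := hnx
    refine ⟨n, hn, ?_⟩
    show f'^[n] q.2 = q.2
    rw [← hfx, ← Function.iterate_succ_apply, Function.iterate_succ_apply', hnx', hfx]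
  refine ⟨hyper, ?_⟩
  intro u w hu hw
  obtain ⟨a, ha⟩ := reach' u
  obtain ⟨n, hn, hnw⟩ := hw
  have hnw' : f'^[n] w = w := hnw
  obtain ⟨b, hb⟩ := reach' w
  have hmul : f'^[n * b] w = w := by
    rw [Function.iterate_mul]
    exact Function.iterate_fixed hnw' b
  have hble : b ≤ n * b := Nat.le_mul_of_pos_left b hn
  refine ⟨(n * b - b) + a, ?_⟩
  show f'^[(n * b - b) + a] u = w
  rw [Function.iterate_add_apply, ha, ← hb, ← Function.iterate_add_apply,
    Nat.sub_add_cancel hble]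
  exact hmul
end

section
/- Let (ρ, x) be a unicycle on a ribbon graph G. For every vertex y and every directed edge e based at y, there exists a unique rotor configuration σ such that (σ, y) is reachable from (ρ, x) by rotor-routing and σ[y] = e. -/
namespace RibbonGraph

variable (G : RibbonGraph)

instance : Finite G.RotorConfig :=
  inferInstanceAs (Finite {ρ : G.V → G.D // ∀ v, G.src (ρ v) = v})

/-! ### Generic dynamics helpers -/

private lemma iterate_mod_of_periodic {α : Type*} (g : α → α) {z : α} {n : ℕ}
    (h : g^[n] z = z) (m : ℕ) : g^[m] z = g^[m % n] z := by
  conv_lhs => rw [← Nat.mod_add_div m n]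
  rw [Function.iterate_add_apply]
  congr 1
  induction (m / n) with
  | zero => rfl
  | succ k ih => rw [Nat.mul_succ, Function.iterate_add_apply, h, ih]

private lemma exists_per {α : Type*} [Finite α] (g : α → α) (x₀ : α) :
    ∃ a : α, ∃ n, 0 < n ∧ g^[n] a = a := by
  obtain ⟨i, j, hne, hij⟩ := Finite.exists_ne_map_eq_of_infinite (fun n : ℕ => g^[n] x₀)
  rcases Nat.lt_or_ge i j with hlt | hge
  · exact ⟨g^[i] x₀, j - i, by omega, by
      rw [← Function.iterate_add_apply, show j - i + i = j by omega]; exact hij.symm⟩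
  · have hlt : j < i := lt_of_le_of_ne hge (fun hh => hne hh.symm)
    exact ⟨g^[j] x₀, i - j, by omega, by
      rw [← Function.iterate_add_apply, show i - j + j = i by omega]; exact hij⟩

/-! ### Degrees and the `next`-orbit at a vertex -/

/-- The number of darts based at a vertex. -/
def deg (u : G.V) : ℕ := (Finset.univ.filter fun d => G.src d = u).card

lemma src_iterate_next (n : ℕ) (d : G.D) : G.src ((⇑G.next)^[n] d) = G.src d := by
  induction n with
  | zero => rfl
  | succ n ih => rw [Function.iterate_succ_apply', G.src_next, ih]

lemma isPeriodicPt_next (d : G.D) :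
    Function.IsPeriodicPt (⇑G.next) (orderOf G.next) d := by
  show (⇑G.next)^[orderOf G.next] d = d
  rw [← Equiv.Perm.coe_pow, pow_orderOf_eq_one G.next]; rfl

lemma minimalPeriod_next_pos (d : G.D) : 0 < Function.minimalPeriod (⇑G.next) d :=
  (G.isPeriodicPt_next d).minimalPeriod_pos (orderOf_pos _)

lemma minimalPeriod_next_eq_deg (d : G.D) :
    Function.minimalPeriod (⇑G.next) d = G.deg (G.src d) := by
  have hpos := G.minimalPeriod_next_pos d
  rw [← Finset.card_range (Function.minimalPeriod (⇑G.next) d)] at *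
  unfold deg
  apply Finset.card_bij (fun i _ => (⇑G.next)^[i] d)
  · intro i _
    simp only [Finset.mem_filter, Finset.mem_univ, true_and]
    exact G.src_iterate_next i d
  · intro a ha b hb hab
    exact Function.iterate_injOn_Iio_minimalPeriod
      (Set.mem_Iio.2 (Finset.mem_range.1 ha)) (Set.mem_Iio.2 (Finset.mem_range.1 hb)) hab
  · intro e he
    simp only [Finset.mem_filter, Finset.mem_univ, true_and] at he
    obtain ⟨n, hn⟩ := G.next_cyclic d e he.symm
    refine ⟨n % Function.minimalPeriod (⇑G.next) d, Finset.mem_range.2 (Nat.mod_lt _ ?_), ?_⟩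
    · simpa using hpos
    · rw [Function.iterate_mod_minimalPeriod_eq]; exact hn

lemma deg_pos_of_dart (d : G.D) : 0 < G.deg (G.src d) := by
  rw [← G.minimalPeriod_next_eq_deg d]; exact G.minimalPeriod_next_pos d

lemma next_iterate_eq_iff (d : G.D) {a b : ℕ} :
    (⇑G.next)^[a] d = (⇑G.next)^[b] d ↔ a % G.deg (G.src d) = b % G.deg (G.src d) := by
  rw [← G.minimalPeriod_next_eq_deg d]
  constructor
  · intro hab
    refine Function.iterate_injOn_Iio_minimalPeriod
      (Set.mem_Iio.2 (Nat.mod_lt _ (G.minimalPeriod_next_pos d)))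
      (Set.mem_Iio.2 (Nat.mod_lt _ (G.minimalPeriod_next_pos d))) ?_
    show (⇑G.next)^[a % _] d = (⇑G.next)^[b % _] d
    rw [Function.iterate_mod_minimalPeriod_eq, Function.iterate_mod_minimalPeriod_eq, hab]
  · intro hab
    rw [← Function.iterate_mod_minimalPeriod_eq (n := a),
      ← Function.iterate_mod_minimalPeriod_eq (n := b), hab]

lemma next_iterate_deg (d : G.D) : (⇑G.next)^[G.deg (G.src d)] d = d := by
  rw [← G.minimalPeriod_next_eq_deg d]; exact Function.iterate_minimalPeriod

lemma card_tgt_filter (u : G.V) :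
    (Finset.univ.filter fun d => G.tgt d = u).card = G.deg u := by
  unfold deg
  apply Finset.card_bij (fun d _ => G.rev d)
  · intro d hd
    simp only [Finset.mem_filter, Finset.mem_univ, true_and] at *
    exact hd
  · intro a _ b _ hab
    have := congrArg G.rev hab
    rwa [G.rev_rev, G.rev_rev] at this
  · intro e he
    simp only [Finset.mem_filter, Finset.mem_univ, true_and] at he
    exact ⟨G.rev e, by
      simp only [Finset.mem_filter, Finset.mem_univ, true_and]
      show G.src (G.rev (G.rev e)) = u
      rwa [G.rev_rev], G.rev_rev e⟩

end RibbonGraph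
namespace RibbonGraph

variable (G : RibbonGraph)

/-! ### Trajectory bookkeeping -/

/-- Chip position after `n` rotor-routing steps. -/
def chipAt (q : G.RotorConfig × G.V) (n : ℕ) : G.V := ((G.rrStep)^[n] q).2

/-- Rotor configuration after `n` rotor-routing steps. -/
def rotAt (q : G.RotorConfig × G.V) (n : ℕ) : G.RotorConfig := ((G.rrStep)^[n] q).1

/-- The dart traversed by the chip at step `n`. -/
def dartAt (q : G.RotorConfig × G.V) (n : ℕ) : G.D :=
  G.next ((G.rotAt q n).1 (G.chipAt q n))

/-- The number of times the chip sits at `u` among the first `n` states. -/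
def vis (q : G.RotorConfig × G.V) (n : ℕ) (u : G.V) : ℕ :=
  ((Finset.range n).filter fun i => G.chipAt q i = u).card

lemma rotAt_succ_apply (q : G.RotorConfig × G.V) (n : ℕ) (u : G.V) :
    (G.rotAt q (n + 1)).1 u =
      if u = G.chipAt q n then G.dartAt q n else (G.rotAt q n).1 u := by
  simp only [rotAt, dartAt, chipAt]
  rw [Function.iterate_succ_apply']
  rfl

lemma chipAt_succ (q : G.RotorConfig × G.V) (n : ℕ) :
    G.chipAt q (n + 1) = G.tgt (G.dartAt q n) := by
  simp only [rotAt, dartAt, chipAt]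
  rw [Function.iterate_succ_apply']
  rfl

lemma src_dartAt (q : G.RotorConfig × G.V) (n : ℕ) :
    G.src (G.dartAt q n) = G.chipAt q n := by
  unfold dartAt
  rw [G.src_next]
  exact (G.rotAt q n).2 _

lemma vis_zero (q : G.RotorConfig × G.V) (u : G.V) : G.vis q 0 u = 0 := rfl

lemma vis_succ (q : G.RotorConfig × G.V) (n : ℕ) (u : G.V) :
    G.vis q (n + 1) u = G.vis q n u + if G.chipAt q n = u then 1 else 0 := by
  unfold vis
  rw [Finset.range_add_one, Finset.filter_insert]
  by_cases h : G.chipAt q n = u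
  · rw [if_pos h, if_pos h, Finset.card_insert_of_notMem (by simp)]
  · rw [if_neg h, if_neg h, Nat.add_zero]

lemma vis_mono (q : G.RotorConfig × G.V) {a b : ℕ} (hab : a ≤ b) (u : G.V) :
    G.vis q a u ≤ G.vis q b u :=
  Finset.card_le_card (Finset.filter_subset_filter _
    (Finset.range_subset_range.2 hab))

lemma vis_lt (q : G.RotorConfig × G.V) {a b : ℕ} (hab : a < b) {u : G.V}
    (h : G.chipAt q a = u) : G.vis q a u < G.vis q b u := by
  have h1 : G.vis q (a + 1) u = G.vis q a u + 1 := by rw [G.vis_succ, if_pos h]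
  have h2 := G.vis_mono q (show a + 1 ≤ b by omega) u
  omega

lemma rotAt_eq_iterate (q : G.RotorConfig × G.V) (n : ℕ) (u : G.V) :
    (G.rotAt q n).1 u = (⇑G.next)^[G.vis q n u] (q.1.1 u) := by
  induction n with
  | zero => rw [vis_zero]; rfl
  | succ n ih =>
    rw [G.rotAt_succ_apply, G.vis_succ]
    by_cases h : G.chipAt q n = u
    · rw [if_pos h.symm, if_pos h]
      unfold dartAt
      rw [h, ih]
      exact (Function.iterate_succ_apply' (⇑G.next) _ _).symm
    · rw [if_neg (fun hh => h hh.symm), if_neg h, Nat.add_zero, ih]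

lemma dartAt_eq (q : G.RotorConfig × G.V) (n : ℕ) :
    G.dartAt q n = (⇑G.next)^[G.vis q n (G.chipAt q n) + 1] (q.1.1 (G.chipAt q n)) := by
  unfold dartAt
  rw [G.rotAt_eq_iterate]
  exact (Function.iterate_succ_apply' (⇑G.next) _ _).symm

lemma vis_achieve (q : G.RotorConfig × G.V) (u : G.V) :
    ∀ n j, j < G.vis q n u → ∃ i, i < n ∧ G.chipAt q i = u ∧ G.vis q i u = j := by
  intro n
  induction n with
  | zero => intro j hj; rw [vis_zero] at hj; omega
  | succ n ih =>
    intro j hj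
    rw [G.vis_succ] at hj
    by_cases h : G.chipAt q n = u
    · rw [if_pos h] at hj
      rcases Nat.lt_or_ge j (G.vis q n u) with hlt | hge
      · obtain ⟨i, hi1, hi2, hi3⟩ := ih j hlt
        exact ⟨i, by omega, hi2, hi3⟩
      · exact ⟨n, by omega, h, by omega⟩
    · rw [if_neg h] at hj
      obtain ⟨i, hi1, hi2, hi3⟩ := ih j (by omega)
      exact ⟨i, by omega, hi2, hi3⟩

lemma vis_window (q : G.RotorConfig × G.V) {a b : ℕ} (hab : a ≤ b) (u : G.V) :
    G.vis q b u = G.vis q a u + ((Finset.Ico a b).filter fun i => G.chipAt q i = u).card := by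
  unfold vis
  rw [Finset.range_eq_Ico,
    ← Finset.Ico_union_Ico_eq_Ico (Nat.zero_le a) hab, Finset.filter_union,
    Finset.card_union_of_disjoint (Finset.disjoint_filter_filter
      (Finset.Ico_disjoint_Ico_consecutive 0 a b)), ← Finset.range_eq_Ico]

lemma chipAt_shift (q : G.RotorConfig × G.V) (i r : ℕ) :
    G.chipAt ((G.rrStep)^[i] q) r = G.chipAt q (r + i) := by
  unfold chipAt
  rw [Function.iterate_add_apply]

lemma rotAt_shift (q : G.RotorConfig × G.V) (i r : ℕ) :
    G.rotAt ((G.rrStep)^[i] q) r = G.rotAt q (r + i) := by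
  unfold rotAt
  rw [Function.iterate_add_apply]

lemma dartAt_shift (q : G.RotorConfig × G.V) (i r : ℕ) :
    G.dartAt ((G.rrStep)^[i] q) r = G.dartAt q (r + i) := by
  unfold dartAt
  rw [G.chipAt_shift, G.rotAt_shift]

lemma chipAt_congr (q : G.RotorConfig × G.V) {m n : ℕ}
    (h : (G.rrStep)^[m] q = (G.rrStep)^[n] q) : G.chipAt q m = G.chipAt q n := by
  unfold chipAt; rw [h]

lemma dartAt_congr (q : G.RotorConfig × G.V) {m n : ℕ}
    (h : (G.rrStep)^[m] q = (G.rrStep)^[n] q) : G.dartAt q m = G.dartAt q n := by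
  unfold dartAt rotAt chipAt; rw [h]

end RibbonGraph
namespace RibbonGraph

variable (G : RibbonGraph)

/-! ### Unicycle dynamics -/

lemma rrStep_fst_apply (σ : G.RotorConfig) (a : G.V) (u : G.V) :
    (G.rrStep (σ, a)).1.1 u = if u = a then G.next (σ.1 a) else σ.1 u := rfl

lemma cfgStep_rrStep (σ : G.RotorConfig) (a : G.V) :
    G.cfgStep (G.rrStep (σ, a)).1 a = (G.rrStep (σ, a)).2 := by
  show G.tgt ((G.rrStep (σ, a)).1.1 a) = _
  rw [G.rrStep_fst_apply, if_pos rfl]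
  rfl

/-- Key structural lemma: after one rotor-routing step from a unicycle, the
result is again a unicycle, and moreover the routed vertex lies on its cycle. -/
lemma unicycle_step_strong (q : G.RotorConfig × G.V) (h : G.Unicycle q) :
    G.Periodic (G.rrStep q).1 q.2 ∧ G.Unicycle (G.rrStep q) := by
  obtain ⟨σ, a⟩ := q
  obtain ⟨hpa, hmut⟩ := h
  set σ' : G.RotorConfig := (G.rrStep (σ, a)).1 with hσ'
  set f : G.V → G.V := G.cfgStep σ with hf
  set g : G.V → G.V := G.cfgStep σ' with hg
  have hfg : ∀ u, u ≠ a → g u = f u := by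
    intro u hu
    show G.tgt (σ'.1 u) = G.tgt (σ.1 u)
    rw [hσ', G.rrStep_fst_apply, if_neg hu]
  -- Claim A : every g-periodic point reaches a under g.
  have claimA : ∀ u, (∃ n, 0 < n ∧ g^[n] u = u) → ∃ i, g^[i] u = a := by
    rintro u ⟨n, hn, hu⟩
    by_contra hno
    push_neg at hno
    have hiter : ∀ i, g^[i] u = f^[i] u := by
      intro i
      induction i with
      | zero => rfl
      | succ i ih =>
        rw [Function.iterate_succ_apply', Function.iterate_succ_apply', ih,
          ← hfg (f^[i] u) (by rw [← ih]; exact hno i)]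
    have huf : G.Periodic σ u := ⟨n, hn, by rw [← hf, ← hiter]; exact hu⟩
    obtain ⟨m, hm⟩ := hmut u a huf hpa
    have hfper : f^[n] u = u := by rw [← hiter]; exact hu
    have : f^[m % n] u = a := by rw [← iterate_mod_of_periodic f hfper m]; exact hm
    exact hno (m % n) (by rw [hiter]; exact this)
  -- a is g-periodic
  obtain ⟨P, nP, hnP, hP⟩ := exists_per g a
  obtain ⟨i, hi⟩ := claimA P ⟨nP, hnP, hP⟩
  have hga : g^[nP] a = a := by
    rw [← hi, ← Function.iterate_add_apply, Nat.add_comm, Function.iterate_add_apply, hP]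
  have hpa' : G.Periodic σ' a := ⟨nP, hnP, hga⟩
  refine ⟨hpa', ?_, ?_⟩
  · -- the new chip position is g-periodic
    show G.Periodic (G.rrStep (σ, a)).1 (G.rrStep (σ, a)).2
    rw [← G.cfgStep_rrStep σ a]
    refine ⟨nP, hnP, ?_⟩
    show g^[nP] (g a) = g a
    rw [← Function.iterate_succ_apply, Function.iterate_succ_apply', hga]
  · -- mutual reachability
    intro u w hu hw
    obtain ⟨iu, hiu⟩ := claimA u hu
    obtain ⟨nw, hnw, hw'⟩ := hw
    obtain ⟨jw, hjw⟩ := claimA w ⟨nw, hnw, hw'⟩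
    have hjw' : g^[jw % nw] w = a := by
      rw [← iterate_mod_of_periodic g hw' jw]; exact hjw
    have hrw : g^[nw - jw % nw] a = w := by
      rw [← hjw', ← Function.iterate_add_apply,
        show nw - jw % nw + jw % nw = nw by
          have := Nat.mod_lt jw hnw; omega]
      exact hw'
    exact ⟨(nw - jw % nw) + iu, by
      rw [Function.iterate_add_apply, hiu, hrw]⟩

lemma unicycle_rrStep {q : G.RotorConfig × G.V} (h : G.Unicycle q) :
    G.Unicycle (G.rrStep q) := (G.unicycle_step_strong q h).2

lemma unicycle_traj {q : G.RotorConfig × G.V} (h : G.Unicycle q) (n : ℕ) :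
    G.Unicycle ((G.rrStep)^[n] q) := by
  induction n with
  | zero => exact h
  | succ n ih => rw [Function.iterate_succ_apply']; exact G.unicycle_rrStep ih

lemma rrStep_inj {q q' : G.RotorConfig × G.V} (hq : G.Unicycle q) (hq' : G.Unicycle q')
    (he : G.rrStep q = G.rrStep q') : q = q' := by
  obtain ⟨σ, a⟩ := q
  obtain ⟨τ, c⟩ := q'
  have hpa := (G.unicycle_step_strong (σ, a) hq).1
  have hpc := (G.unicycle_step_strong (τ, c) hq').1
  set π : G.RotorConfig := (G.rrStep (σ, a)).1 with hπ
  have hπ' : (G.rrStep (τ, c)).1 = π := by rw [hπ, he]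
  rw [hπ'] at hpc
  set g : G.V → G.V := G.cfgStep π with hg
  have hgac : g a = g c := by
    show G.cfgStep (G.rrStep (σ, a)).1 a = G.cfgStep π c
    rw [G.cfgStep_rrStep, ← hπ', G.cfgStep_rrStep, he]
  obtain ⟨na, hna, ha⟩ := hpa
  obtain ⟨nc, hnc, hc⟩ := hpc
  have h1 : g^[na * nc] a = a := by
    rw [iterate_mod_of_periodic g ha (na * nc), Nat.mul_mod_right]; rfl
  have h2 : g^[na * nc] c = c := by
    rw [iterate_mod_of_periodic g hc (na * nc), Nat.mul_mod_left]; rfl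
  have hac : a = c := by
    have hsucc : na * nc = (na * nc - 1) + 1 := by
      have : 0 < na * nc := Nat.mul_pos hna hnc
      omega
    rw [hsucc] at h1 h2
    rw [← h1, ← h2, Function.iterate_succ_apply, Function.iterate_succ_apply, hgac]
  subst hac
  have hστ : σ = τ := by
    apply Subtype.ext
    funext u
    by_cases hu : u = a
    · subst hu
      have e1 : G.next (σ.1 u) = π.1 u := by
        rw [hπ, G.rrStep_fst_apply, if_pos rfl]
      have e2 : G.next (τ.1 u) = π.1 u := by
        rw [← hπ', G.rrStep_fst_apply, if_pos rfl]
      exact G.next.injective (by rw [e1, e2])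
    · have e1 : σ.1 u = π.1 u := by
        rw [hπ, G.rrStep_fst_apply, if_neg hu]
      have e2 : τ.1 u = π.1 u := by
        rw [← hπ', G.rrStep_fst_apply, if_neg hu]
      rw [e1, e2]
  rw [hστ]

lemma exists_period {q : G.RotorConfig × G.V} (hq : G.Unicycle q) :
    ∃ N, 0 < N ∧ (G.rrStep)^[N] q = q := by
  have strip : ∀ k (a b : G.RotorConfig × G.V), G.Unicycle a → G.Unicycle b →
      (G.rrStep)^[k] a = (G.rrStep)^[k] b → a = b := by
    intro k
    induction k with
    | zero => intro a b _ _ h; exact h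
    | succ k ih =>
      intro a b ha hb hk
      rw [Function.iterate_succ_apply, Function.iterate_succ_apply] at hk
      exact G.rrStep_inj ha hb (ih _ _ (G.unicycle_rrStep ha) (G.unicycle_rrStep hb) hk)
  obtain ⟨i, j, hne, hij⟩ := Finite.exists_ne_map_eq_of_infinite (fun n : ℕ => (G.rrStep)^[n] q)
  have main : ∀ i j : ℕ, i < j → (G.rrStep)^[i] q = (G.rrStep)^[j] q →
      ∃ N, 0 < N ∧ (G.rrStep)^[N] q = q := by
    intro i j hlt hij
    refine ⟨j - i, by omega, ?_⟩
    have : (G.rrStep)^[i] ((G.rrStep)^[j-i] q) = (G.rrStep)^[i] q := by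
      rw [← Function.iterate_add_apply, show i + (j - i) = j by omega]
      exact hij.symm
    exact strip i _ _ (G.unicycle_traj hq _) hq this
  rcases Nat.lt_or_ge i j with hlt | hge
  · exact main i j hlt hij
  · exact main j i (lt_of_le_of_ne hge (fun hh => hne hh.symm)) hij.symm

end RibbonGraph
namespace RibbonGraph

variable (G : RibbonGraph)

/-! ### The first repeated dart -/

/-- Times at which the trajectory repeats a previously traversed dart. -/
def retSet (q : G.RotorConfig × G.V) : Set ℕ :=
  {t | ∃ s, s < t ∧ G.dartAt q s = G.dartAt q t}

lemma retSet_nonempty (q : G.RotorConfig × G.V) : (G.retSet q).Nonempty := by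
  obtain ⟨i, j, hne, hij⟩ := Finite.exists_ne_map_eq_of_infinite (G.dartAt q)
  rcases Nat.lt_or_ge i j with hlt | hge
  · exact ⟨j, i, hlt, hij⟩
  · exact ⟨i, j, lt_of_le_of_ne hge (fun hh => hne hh.symm), hij.symm⟩

/-- The first time a previously traversed dart is traversed again. -/
noncomputable def ret (q : G.RotorConfig × G.V) : ℕ := sInf (G.retSet q)

lemma ret_mem (q : G.RotorConfig × G.V) :
    ∃ s, s < G.ret q ∧ G.dartAt q s = G.dartAt q (G.ret q) :=
  Nat.sInf_mem (G.retSet_nonempty q)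

lemma ret_pos (q : G.RotorConfig × G.V) : 0 < G.ret q := by
  rcases Nat.eq_zero_or_pos (G.ret q) with h0 | h
  · obtain ⟨s, hs, _⟩ := G.ret_mem q
    omega
  · exact h

lemma dartAt_injOn (q : G.RotorConfig × G.V) {i j : ℕ} (hi : i < G.ret q)
    (hj : j < G.ret q) (hij : G.dartAt q i = G.dartAt q j) : i = j := by
  rcases lt_trichotomy i j with h | h | h
  · exact absurd (⟨i, h, hij⟩ : j ∈ G.retSet q) (Nat.notMem_of_lt_sInf hj)
  · exact h
  · exact absurd (⟨j, h, hij.symm⟩ : i ∈ G.retSet q) (Nat.notMem_of_lt_sInf hi)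

lemma ret_le_card (q : G.RotorConfig × G.V) : G.ret q ≤ Fintype.card G.D := by
  have h := Finset.card_le_card_of_injOn (f := G.dartAt q)
    (s := Finset.range (G.ret q)) (t := Finset.univ)
    (fun _ _ => Finset.mem_univ _)
    (fun i hi j hj hij => G.dartAt_injOn q
      (Finset.mem_range.1 (Finset.mem_coe.1 hi)) (Finset.mem_range.1 (Finset.mem_coe.1 hj)) hij)
  simpa using h

/-- For a unicycle, the first repeated dart is the very first dart traversed. -/
lemma dartAt_ret (q : G.RotorConfig × G.V) :
    G.dartAt q (G.ret q) = G.dartAt q 0 := by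
  obtain ⟨s, hst, hseq⟩ := G.ret_mem q
  rcases Nat.eq_zero_or_pos s with rfl | hs
  · exact hseq.symm
  exfalso
  set t := G.ret q with ht
  have htpos : 0 < t := G.ret_pos q
  set u := G.chipAt q t with hu
  have hsu : G.chipAt q s = u := by
    rw [hu, ← G.src_dartAt, ← G.src_dartAt, hseq]
  have hchipt : G.chipAt q t = u := rfl
  have hvlt : G.vis q s u < G.vis q t u := G.vis_lt q hst hsu
  -- the rotor at u makes at least one full turn between times s and t
  have hdvd : G.deg u ∣ (G.vis q t u - G.vis q s u) := by
    have h1 := hseq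
    rw [G.dartAt_eq q s, G.dartAt_eq q t, hsu, hchipt] at h1
    have h2 := (G.next_iterate_eq_iff (q.1.1 u)).1 h1
    rw [q.1.2 u] at h2
    have h3 : G.vis q s u + 1 ≡ G.vis q t u + 1 [MOD G.deg u] := h2
    have h4 : G.vis q s u ≡ G.vis q t u [MOD G.deg u] := Nat.ModEq.add_right_cancel' 1 h3
    exact (Nat.modEq_iff_dvd' (le_of_lt hvlt)).1 h4
  have hdegpos : 0 < G.deg u := by
    have := G.deg_pos_of_dart (q.1.1 u)
    rwa [q.1.2 u] at this
  have hdle : G.deg u ≤ G.vis q t u - G.vis q s u :=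
    Nat.le_of_dvd (by omega) hdvd
  -- the visits to u in the interval (s, t]
  set Vis := (Finset.Ico (s+1) (t+1)).filter (fun i => G.chipAt q i = u) with hVis
  have hcard : Vis.card = G.vis q t u - G.vis q s u := by
    have h1 : G.vis q (t+1) u = G.vis q (s+1) u + Vis.card :=
      G.vis_window q (by omega) u
    have h2 : G.vis q (t+1) u = G.vis q t u + 1 := by rw [G.vis_succ, if_pos hchipt]
    have h3 : G.vis q (s+1) u = G.vis q s u + 1 := by rw [G.vis_succ, if_pos hsu]
    omega
  set ind := Finset.univ.filter (fun d => G.tgt d = u) with hind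
  have hmaps : ∀ i ∈ Vis, G.dartAt q (i-1) ∈ ind := by
    intro i hi
    obtain ⟨hico, hchip⟩ := Finset.mem_filter.1 hi
    obtain ⟨hi1, hi2⟩ := Finset.mem_Ico.1 hico
    refine Finset.mem_filter.2 ⟨Finset.mem_univ _, ?_⟩
    have : G.chipAt q ((i-1)+1) = G.tgt (G.dartAt q (i-1)) := G.chipAt_succ q (i-1)
    rw [show (i-1)+1 = i by omega, hchip] at this
    exact this.symm
  have hinjOn : Set.InjOn (fun i => G.dartAt q (i-1)) Vis := by
    intro i hi j hj hij
    obtain ⟨hico, _⟩ := Finset.mem_filter.1 (Finset.mem_coe.1 hi)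
    obtain ⟨hjco, _⟩ := Finset.mem_filter.1 (Finset.mem_coe.1 hj)
    obtain ⟨hi1, hi2⟩ := Finset.mem_Ico.1 hico
    obtain ⟨hj1, hj2⟩ := Finset.mem_Ico.1 hjco
    have := G.dartAt_injOn q (show i - 1 < t by omega) (show j - 1 < t by omega) hij
    omega
  have hle : Vis.card ≤ ind.card := Finset.card_le_card_of_injOn _ hmaps hinjOn
  have hindcard : ind.card = G.deg u := G.card_tgt_filter u
  have hcard_eq : Vis.card = ind.card := by omega
  have himg : Vis.image (fun i => G.dartAt q (i-1)) = ind := by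
    apply Finset.eq_of_subset_of_card_le
    · exact Finset.image_subset_iff.2 hmaps
    · rw [Finset.card_image_of_injOn hinjOn, hcard_eq]
  -- the dart along which the chip arrived at u at time s is an in-dart at u
  have hdmem : G.dartAt q (s-1) ∈ ind := by
    refine Finset.mem_filter.2 ⟨Finset.mem_univ _, ?_⟩
    have : G.chipAt q ((s-1)+1) = G.tgt (G.dartAt q (s-1)) := G.chipAt_succ q (s-1)
    rw [show (s-1)+1 = s by omega, hsu] at this
    exact this.symm
  rw [← himg] at hdmem
  obtain ⟨i, hiVis, hieq⟩ := Finset.mem_image.1 hdmem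
  obtain ⟨hico, _⟩ := Finset.mem_filter.1 hiVis
  obtain ⟨hi1, hi2⟩ := Finset.mem_Ico.1 hico
  have := G.dartAt_injOn q (show i - 1 < t by omega) (show s - 1 < t by omega) hieq
  omega

end RibbonGraph
namespace RibbonGraph

variable (G : RibbonGraph)

/-! ### The gap sequence: successive traversal times of the initial dart -/

/-- `gapSeq q j` is the time of the `j`-th traversal of the dart `dartAt q 0`. -/
noncomputable def gapSeq (q : G.RotorConfig × G.V) : ℕ → ℕ :=
  Nat.rec 0 (fun _ s => s + G.ret ((G.rrStep)^[s] q))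

lemma gapSeq_zero (q : G.RotorConfig × G.V) : G.gapSeq q 0 = 0 := rfl

lemma gapSeq_succ (q : G.RotorConfig × G.V) (j : ℕ) :
    G.gapSeq q (j + 1) = G.gapSeq q j + G.ret ((G.rrStep)^[G.gapSeq q j] q) := rfl

lemma gapSeq_lt (q : G.RotorConfig × G.V) (j : ℕ) :
    G.gapSeq q j < G.gapSeq q (j + 1) := by
  rw [G.gapSeq_succ]
  have := G.ret_pos ((G.rrStep)^[G.gapSeq q j] q)
  omega

lemma gapSeq_strictMono (q : G.RotorConfig × G.V) : StrictMono (G.gapSeq q) :=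
  strictMono_nat_of_lt_succ (G.gapSeq_lt q)

lemma gapSeq_ge (q : G.RotorConfig × G.V) (j : ℕ) : j ≤ G.gapSeq q j := by
  induction j with
  | zero => exact Nat.zero_le _
  | succ j ih => have := G.gapSeq_lt q j; omega

lemma gapSeq_le_mul (q : G.RotorConfig × G.V) (j : ℕ) :
    G.gapSeq q j ≤ Fintype.card G.D * j := by
  induction j with
  | zero => simp [gapSeq_zero]
  | succ j ih =>
    have h := G.ret_le_card ((G.rrStep)^[G.gapSeq q j] q)
    rw [G.gapSeq_succ, Nat.mul_succ]
    omega

lemma gapSeq_le_start (q : G.RotorConfig × G.V) (j : ℕ) (hj : 1 ≤ j) :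
    G.gapSeq q j ≤ G.ret q + Fintype.card G.D * (j - 1) := by
  induction j with
  | zero => omega
  | succ j ih =>
    rcases Nat.eq_zero_or_pos j with rfl | hjpos
    · rw [G.gapSeq_succ, G.gapSeq_zero]
      simp [Function.iterate_zero_apply]
    · have h := G.ret_le_card ((G.rrStep)^[G.gapSeq q j] q)
      rw [G.gapSeq_succ]
      have hih := ih hjpos
      have : j + 1 - 1 = (j - 1) + 1 := by omega
      rw [this, Nat.mul_succ]
      omega

lemma dartAt_gapSeq (q : G.RotorConfig × G.V) (j : ℕ) :
    G.dartAt q (G.gapSeq q j) = G.dartAt q 0 := by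
  induction j with
  | zero => rfl
  | succ j ih =>
    rw [G.gapSeq_succ, Nat.add_comm,
      ← G.dartAt_shift q (G.gapSeq q j) (G.ret ((G.rrStep)^[G.gapSeq q j] q)),
      G.dartAt_ret, G.dartAt_shift, Nat.zero_add, ih]

lemma dartAt_not_between (q : G.RotorConfig × G.V) (j r : ℕ)
    (h1 : G.gapSeq q j < r) (h2 : r < G.gapSeq q (j + 1)) :
    G.dartAt q r ≠ G.dartAt q 0 := by
  intro hcon
  set sj := G.gapSeq q j with hsj
  set q' := (G.rrStep)^[sj] q with hq'
  have hr : r = (r - sj) + sj := by omega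
  have h3 : G.dartAt q' (r - sj) = G.dartAt q r := by rw [G.dartAt_shift, ← hr]
  have h4 : G.dartAt q' 0 = G.dartAt q sj := by rw [G.dartAt_shift, Nat.zero_add]
  have h5 : G.dartAt q' (r - sj) = G.dartAt q' 0 := by
    rw [h3, h4, hcon, hsj, G.dartAt_gapSeq]
  have h6 : r - sj < G.ret q' := by
    have h7 : G.gapSeq q (j+1) = sj + G.ret q' := G.gapSeq_succ q j
    omega
  have := G.dartAt_injOn q' h6 (lt_of_le_of_lt (Nat.zero_le _) h6) h5
  omega

lemma gapSeq_exhaust (q : G.RotorConfig × G.V) (t : ℕ)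
    (ht : G.dartAt q t = G.dartAt q 0) : ∃ j, t = G.gapSeq q j := by
  have hex : ∃ j, t < G.gapSeq q j :=
    ⟨t + 1, lt_of_lt_of_le (by omega) (G.gapSeq_ge q (t+1))⟩
  have hspec : t < G.gapSeq q (Nat.find hex) := Nat.find_spec hex
  have hne : Nat.find hex ≠ 0 := by
    intro h0
    rw [h0, G.gapSeq_zero] at hspec
    omega
  obtain ⟨j, hj⟩ : ∃ j, Nat.find hex = j + 1 := ⟨Nat.find hex - 1, by omega⟩
  rw [hj] at hspec
  have hle : G.gapSeq q j ≤ t := by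
    have := Nat.find_min hex (show j < Nat.find hex by omega)
    omega
  rcases Nat.eq_or_lt_of_le hle with heq | hlt
  · exact ⟨j, heq.symm⟩
  · exact absurd ht (G.dartAt_not_between q j t hlt hspec)

end RibbonGraph
namespace RibbonGraph

variable (G : RibbonGraph)

/-! ### Counting traversals over a period -/

lemma traj_periodic {q : G.RotorConfig × G.V} {N : ℕ} (hN : (G.rrStep)^[N] q = q)
    (i : ℕ) : (G.rrStep)^[i + N] q = (G.rrStep)^[i] q := by
  rw [Function.iterate_add_apply, hN]

/-- Every dart is eventually traversed. -/
lemma dart_used {q : G.RotorConfig × G.V} {N : ℕ} (hN : (G.rrStep)^[N] q = q)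
    (hNpos : 0 < N) : ∀ d : G.D, ∃ i, G.dartAt q i = d := by
  have hchipper : ∀ i l, G.chipAt q (i + l * N) = G.chipAt q i := by
    intro i l
    induction l with
    | zero => rw [Nat.zero_mul, Nat.add_zero]
    | succ l ih =>
      rw [Nat.succ_mul, ← Nat.add_assoc]
      rw [G.chipAt_congr q (G.traj_periodic hN (i + l * N))]
      exact ih
  -- visits to a visited vertex are unbounded
  have hunbdd : ∀ u, (∃ i, G.chipAt q i = u) → ∀ j, ∃ n, j < G.vis q n u := by
    rintro u ⟨i, hi⟩ j
    refine ⟨i + j * N + 1, ?_⟩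
    have hcard := Finset.card_le_card_of_injOn (f := fun l => i + l * N)
      (s := Finset.range (j+1))
      (t := (Finset.range (i + j * N + 1)).filter fun i' => G.chipAt q i' = u)
      (by
        intro l hl
        have hl' := Finset.mem_range.1 hl
        refine Finset.mem_filter.2 ⟨Finset.mem_range.2 ?_, ?_⟩
        · show i + l * N < i + j * N + 1
          have : l * N ≤ j * N := Nat.mul_le_mul_right N (by omega)
          omega
        · show G.chipAt q (i + l * N) = u
          rw [hchipper i l, hi])
      (by
        intro l1 h1 l2 h2 he
        have he' : i + l1 * N = i + l2 * N := he
        have : l1 * N = l2 * N := by omega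
        exact Nat.eq_of_mul_eq_mul_right hNpos this)
    rw [Finset.card_range] at hcard
    have : G.vis q (i + j * N + 1) u =
        ((Finset.range (i + j * N + 1)).filter fun i' => G.chipAt q i' = u).card := rfl
    omega
  -- a visited vertex eventually sends the chip along each of its darts
  have hstep : ∀ u, (∃ i, G.chipAt q i = u) → ∀ d, G.src d = u → ∃ i, G.dartAt q i = d := by
    intro u hu d hd
    obtain ⟨n₀, hn₀⟩ := G.next_cyclic (q.1.1 u) d (by rw [q.1.2 u, hd])
    have hdegpos : 0 < G.deg u := by
      have := G.deg_pos_of_dart (q.1.1 u); rwa [q.1.2 u] at this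
    have hfull : (⇑G.next)^[G.deg u] (q.1.1 u) = q.1.1 u := by
      have := G.next_iterate_deg (q.1.1 u); rwa [q.1.2 u] at this
    have hiter : (⇑G.next)^[(n₀ + G.deg u - 1) + 1] (q.1.1 u) = d := by
      rw [show (n₀ + G.deg u - 1) + 1 = n₀ + G.deg u by omega,
        Function.iterate_add_apply, hfull, hn₀]
    obtain ⟨n, hn⟩ := hunbdd u hu (n₀ + G.deg u - 1)
    obtain ⟨i, _, hchip, hvisi⟩ := G.vis_achieve q u n _ hn
    exact ⟨i, by rw [G.dartAt_eq, hchip, hvisi, hiter]⟩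
  -- every vertex is visited, by connectivity
  have hvisited : ∀ u, ∃ i, G.chipAt q i = u := by
    intro u
    have hconn := G.conn (G.chipAt q 0) u
    induction hconn with
    | refl => exact ⟨0, rfl⟩
    | tail hab hbc ih =>
      obtain ⟨d, hd1, hd2⟩ := hbc
      obtain ⟨i, hi⟩ := hstep _ ih d hd1
      exact ⟨i + 1, by rw [G.chipAt_succ, hi]; exact hd2⟩
  intro d
  exact hstep (G.src d) (hvisited _) d rfl

lemma count_Ico_shift {q : G.RotorConfig × G.V} {N : ℕ} (hN : (G.rrStep)^[N] q = q)
    (d : G.D) (a : ℕ) :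
    ((Finset.Ico a (a + N)).filter fun i => G.dartAt q i = d).card =
      ((Finset.range N).filter fun i => G.dartAt q i = d).card := by
  rcases Nat.eq_zero_or_pos N with rfl | hNpos
  · simp
  induction a with
  | zero => rw [Nat.zero_add, Finset.range_eq_Ico]
  | succ a ih =>
    rw [← ih]
    have F : ℕ → ℕ := fun i => if G.dartAt q i = d then 1 else 0
    have hsum : ∀ a' b', ((Finset.Ico a' b').filter fun i => G.dartAt q i = d).card =
        ∑ i ∈ Finset.Ico a' b', (if G.dartAt q i = d then 1 else 0) := by
      intro a' b'; rw [Finset.card_filter]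
    rw [hsum, hsum]
    have h1 : a + 1 + N = (a + N) + 1 := by omega
    rw [h1, Finset.sum_Ico_succ_top (by omega),
      Finset.sum_eq_sum_Ico_succ_bot (show a < a + N by omega)]
    have h2 : G.dartAt q (a + N) = G.dartAt q a := G.dartAt_congr q (G.traj_periodic hN a)
    rw [h2]
    omega

lemma sum_counts {q : G.RotorConfig × G.V} (N : ℕ) :
    ∑ d : G.D, ((Finset.range N).filter fun i => G.dartAt q i = d).card = N := by
  rw [← Finset.card_eq_sum_card_fiberwise (f := G.dartAt q) (s := Finset.range N)
    (t := Finset.univ) (fun x _ => Finset.mem_univ _), Finset.card_range]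

lemma le_gapSeq_count (q : G.RotorConfig × G.V) {N K : ℕ}
    (hK : ((Finset.range N).filter fun r => G.dartAt q r = G.dartAt q 0).card ≤ K) :
    N ≤ G.gapSeq q K := by
  by_contra hcon
  push_neg at hcon
  have hcard := Finset.card_le_card_of_injOn (f := G.gapSeq q)
    (s := Finset.range (K+1))
    (t := (Finset.range N).filter fun r => G.dartAt q r = G.dartAt q 0)
    (by
      intro j hj
      have hj' := Finset.mem_range.1 hj
      refine Finset.mem_filter.2 ⟨Finset.mem_range.2 ?_, G.dartAt_gapSeq q j⟩
      have : G.gapSeq q j ≤ G.gapSeq q K := (G.gapSeq_strictMono q).monotone (by omega)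
      omega)
    (fun i _ j _ hij => (G.gapSeq_strictMono q).injective hij)
  rw [Finset.card_range] at hcard
  omega

lemma count_shift_frame (q : G.RotorConfig × G.V) (t₀ N : ℕ) (d : G.D) :
    ((Finset.range N).filter fun r => G.dartAt ((G.rrStep)^[t₀] q) r = d).card =
      ((Finset.Ico t₀ (t₀ + N)).filter fun i => G.dartAt q i = d).card := by
  apply Finset.card_bij (fun r _ => r + t₀)
  · intro r hr
    obtain ⟨hr1, hr2⟩ := Finset.mem_filter.1 hr
    refine Finset.mem_filter.2 ⟨Finset.mem_Ico.2 ⟨by omega, ?_⟩, ?_⟩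
    · have := Finset.mem_range.1 hr1; omega
    · rw [← G.dartAt_shift]; exact hr2
  · intro r1 _ r2 _ h; omega
  · intro i hi
    obtain ⟨hi1, hi2⟩ := Finset.mem_filter.1 hi
    obtain ⟨hi3, hi4⟩ := Finset.mem_Ico.1 hi1
    refine ⟨i - t₀, Finset.mem_filter.2 ⟨Finset.mem_range.2 (by omega), ?_⟩, by omega⟩
    rw [G.dartAt_shift, show i - t₀ + t₀ = i by omega]
    exact hi2

/-- For a unicycle, the first dart repeat happens after exactly `|D|` steps. -/
lemma ret_eq_card {q : G.RotorConfig × G.V} (hq : G.Unicycle q) :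
    G.ret q = Fintype.card G.D := by
  obtain ⟨N, hNpos, hN⟩ := G.exists_period hq
  have hMpos : 0 < Fintype.card G.D := Fintype.card_pos_iff.2 ⟨q.1.1 q.2⟩
  set M := Fintype.card G.D with hM
  set cnt : G.D → ℕ := fun d => ((Finset.range N).filter fun i => G.dartAt q i = d).card
    with hcnt
  have hsum : ∑ d : G.D, cnt d = N := G.sum_counts N
  have hlow : ∀ d, N ≤ M * cnt d := by
    intro d
    obtain ⟨t₀, ht₀⟩ := G.dart_used hN hNpos d
    set q' := (G.rrStep)^[t₀] q with hq'
    have hd0 : G.dartAt q' 0 = d := by rw [G.dartAt_shift, Nat.zero_add, ht₀]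
    have hcnt' : ((Finset.range N).filter fun r => G.dartAt q' r = G.dartAt q' 0).card
        = cnt d := by
      rw [hd0, G.count_shift_frame q t₀ N d, G.count_Ico_shift hN d t₀]
    have h1 : N ≤ G.gapSeq q' (cnt d) := G.le_gapSeq_count q' (le_of_eq hcnt')
    exact le_trans h1 (G.gapSeq_le_mul q' (cnt d))
  have hupp : ∀ d, M * cnt d ≤ N := by
    intro d₁
    by_contra hcon
    push_neg at hcon
    have hlt : ∑ _d : G.D, N < ∑ d : G.D, M * cnt d :=
      Finset.sum_lt_sum (fun d _ => hlow d) ⟨d₁, Finset.mem_univ d₁, hcon⟩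
    rw [Finset.sum_const, Finset.card_univ, ← Finset.mul_sum, hsum, smul_eq_mul, ← hM] at hlt
    omega
  -- now for the specific dart traversed at time 0
  have hK₀pos : 0 < cnt (G.dartAt q 0) := by
    apply Finset.card_pos.2
    exact ⟨0, Finset.mem_filter.2 ⟨Finset.mem_range.2 hNpos, rfl⟩⟩
  have hKeq : M * cnt (G.dartAt q 0) = N := le_antisymm (hupp _) (hlow _)
  have h1 : N ≤ G.gapSeq q (cnt (G.dartAt q 0)) := G.le_gapSeq_count q (le_refl _)
  have h2 : G.gapSeq q (cnt (G.dartAt q 0)) ≤ G.ret q + M * (cnt (G.dartAt q 0) - 1) :=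
    G.gapSeq_le_start q _ hK₀pos
  have h3 : G.ret q ≤ M := G.ret_le_card q
  obtain ⟨K', hK'⟩ : ∃ K', cnt (G.dartAt q 0) = K' + 1 := ⟨_, (Nat.succ_pred_eq_of_pos hK₀pos).symm⟩
  rw [hK'] at hKeq h2
  rw [Nat.mul_succ] at hKeq
  have h4 : K' + 1 - 1 = K' := rfl
  rw [h4] at h2
  rw [hK'] at h1
  omega

lemma vis_card {q : G.RotorConfig × G.V} (hq : G.Unicycle q) (u : G.V) :
    G.vis q (Fintype.card G.D) u = G.deg u := by
  have hret := G.ret_eq_card hq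
  have hinj : Set.InjOn (G.dartAt q) (Finset.range (Fintype.card G.D)) := by
    intro i hi j hj hij
    exact G.dartAt_injOn q (hret ▸ Finset.mem_range.1 (Finset.mem_coe.1 hi))
      (hret ▸ Finset.mem_range.1 (Finset.mem_coe.1 hj)) hij
  have himg : (Finset.range (Fintype.card G.D)).image (G.dartAt q) = Finset.univ := by
    apply Finset.eq_univ_of_card
    rw [Finset.card_image_of_injOn hinj, Finset.card_range]
  have hfe : (Finset.range (Fintype.card G.D)).filter (fun i => G.chipAt q i = u) =
      (Finset.range (Fintype.card G.D)).filter (fun i => G.src (G.dartAt q i) = u) := by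
    apply Finset.filter_congr
    intro i _
    rw [G.src_dartAt]
  show ((Finset.range (Fintype.card G.D)).filter fun i => G.chipAt q i = u).card = _
  rw [hfe]
  have h2 := (Finset.filter_image (f := G.dartAt q) (s := Finset.range (Fintype.card G.D))
    (p := fun d => G.src d = u)).symm
  have h3 : (((Finset.range (Fintype.card G.D)).filter
      (fun i => G.src (G.dartAt q i) = u)).image (G.dartAt q)).card =
      ((Finset.range (Fintype.card G.D)).filter (fun i => G.src (G.dartAt q i) = u)).card :=
    Finset.card_image_of_injOn (hinj.mono (by
      intro i hi
      exact Finset.mem_coe.2 (Finset.mem_of_mem_filter i (Finset.mem_coe.1 hi))))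
  rw [← h3, h2, himg]
  rfl

/-- A unicycle returns to itself after exactly `|D|` rotor-routing steps. -/
lemma traj_card {q : G.RotorConfig × G.V} (hq : G.Unicycle q) :
    (G.rrStep)^[Fintype.card G.D] q = q := by
  have hret := G.ret_eq_card hq
  have hrot : G.rotAt q (Fintype.card G.D) = q.1 := by
    apply Subtype.ext
    funext u
    rw [G.rotAt_eq_iterate, G.vis_card hq u]
    have := G.next_iterate_deg (q.1.1 u)
    rwa [q.1.2 u] at this
  have hchip : G.chipAt q (Fintype.card G.D) = q.2 := by
    rw [← G.src_dartAt, ← hret, G.dartAt_ret, G.src_dartAt]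
    rfl
  have heta : (G.rrStep)^[Fintype.card G.D] q =
      (G.rotAt q (Fintype.card G.D), G.chipAt q (Fintype.card G.D)) := rfl
  rw [heta, hrot, hchip]

end RibbonGraph
/-- for a unicycle `(ρ, x)`, every vertex `y` and dart `e` based at
`y` determine a unique rotor configuration `σ` with `(σ, y)` reachable from
`(ρ, x)` and `σ[y] = e`. -/
theorem reaches_unique_rotor (G : RibbonGraph) (ρ : G.RotorConfig) (x : G.V)
    (h : G.Unicycle (ρ, x)) (y : G.V) (e : G.D) (he : G.src e = y) :
    ∃! σ : G.RotorConfig, G.Reaches (ρ, x) (σ, y) ∧ σ.1 y = e := by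
  classical
  set q : G.RotorConfig × G.V := (ρ, x) with hqdef
  set M := Fintype.card G.D with hMdef
  have hM : (G.rrStep)^[M] q = q := G.traj_card h
  have hMpos : 0 < M := Fintype.card_pos_iff.2 ⟨ρ.1 x⟩
  have hvis : G.vis q M y = G.deg y := G.vis_card h y
  have hdegpos : 0 < G.deg y := by
    have := G.deg_pos_of_dart e; rwa [he] at this
  have hsrc : G.src (ρ.1 y) = y := ρ.2 y
  obtain ⟨r, hr⟩ := G.next_cyclic (ρ.1 y) e (by rw [hsrc, he])
  have hr' : (⇑G.next)^[r % G.deg y] (ρ.1 y) = e := by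
    rw [← hr]
    apply (G.next_iterate_eq_iff (ρ.1 y)).2
    rw [hsrc]
    exact Nat.mod_mod_of_dvd r dvd_rfl
  have hr'lt : r % G.deg y < G.vis q M y := by
    rw [hvis]; exact Nat.mod_lt r hdegpos
  obtain ⟨i, hiM, hchipi, hvisi⟩ := G.vis_achieve q y M (r % G.deg y) hr'lt
  have hrot_i : (G.rotAt q i).1 y = e := by
    rw [G.rotAt_eq_iterate, hvisi]; exact hr'
  refine ⟨G.rotAt q i, ⟨⟨i + M, by omega, ?_⟩, hrot_i⟩, ?_⟩
  · show (G.rrStep)^[i + M] q = (G.rotAt q i, y)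
    rw [G.traj_periodic hM i]
    have heta : (G.rrStep)^[i] q = (G.rotAt q i, G.chipAt q i) := rfl
    rw [heta, hchipi]
  · rintro σ' ⟨⟨n, hnpos, hn⟩, hσ'y⟩
    have hmod : (G.rrStep)^[n] q = (G.rrStep)^[n % M] q :=
      RibbonGraph.iterate_mod_of_periodic (G.rrStep) hM n
    have ha : (G.rrStep)^[n % M] q = (σ', y) := by rw [← hmod]; exact hn
    have hchipa : G.chipAt q (n % M) = y := by
      show ((G.rrStep)^[n % M] q).2 = y
      rw [ha]
    have hrota : G.rotAt q (n % M) = σ' := by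
      show ((G.rrStep)^[n % M] q).1 = σ'
      rw [ha]
    have haM : n % M < M := Nat.mod_lt n hMpos
    have key : ∀ c b, c < b → b < M → G.chipAt q c = y → G.chipAt q b = y →
        G.vis q c y % G.deg y = G.vis q b y % G.deg y → False := by
      intro c b hcb hbM hc hb hmodeq
      have h1 : G.vis q c y < G.vis q b y := G.vis_lt q hcb hc
      have hdvd : G.deg y ∣ G.vis q b y - G.vis q c y :=
        (Nat.modEq_iff_dvd' (le_of_lt h1)).1 hmodeq
      have h2 : G.deg y ≤ G.vis q b y - G.vis q c y := Nat.le_of_dvd (by omega) hdvd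
      have h3 : G.vis q (b+1) y = G.vis q b y + 1 := by rw [G.vis_succ, if_pos hb]
      have h4 : G.vis q (b+1) y ≤ G.vis q M y := G.vis_mono q (by omega) y
      rw [hvis] at h4
      omega
    have hrv_a : (⇑G.next)^[G.vis q (n % M) y] (ρ.1 y) = e := by
      rw [← G.rotAt_eq_iterate, hrota]; exact hσ'y
    have hrv_i : (⇑G.next)^[G.vis q i y] (ρ.1 y) = e := by
      rw [hvisi]; exact hr'
    have hmodeq : G.vis q (n % M) y % G.deg y = G.vis q i y % G.deg y := by
      have := (G.next_iterate_eq_iff (ρ.1 y)).1 (hrv_a.trans hrv_i.symm)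
      rwa [hsrc] at this
    rcases lt_trichotomy (n % M) i with hlt | heq | hgt
    · exact (key (n % M) i hlt hiM hchipa hchipi hmodeq).elim
    · rw [← hrota, heq]
    · exact (key i (n % M) hgt haM hchipi hchipa hmodeq.symm).elim
end

section
/- Reversibility of a cycle is well-defined: let C be a directed cycle in a ribbon graph G. If (ρ̄′, v′) is reachable from (ρ′, v′) by rotor-routing for some unicycle (ρ′, v′) with C(ρ′) = C, then (ρ̄, v) is reachable from (ρ, v) for every unicycle (ρ, v) with C(ρ) = C. (Here ρ̄ denotes ρ with the edges of C reversed.) -/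
namespace RibbonGraph

variable (G : RibbonGraph)

lemma tgt_rev (d : G.D) : G.tgt (G.rev d) = G.src d := by
  unfold tgt; rw [G.rev_rev]

/-- the set of darts based at `w`. -/
def fib (w : G.V) : Finset G.D := Finset.univ.filter (fun d => G.src d = w)

lemma mem_fib {w : G.V} {d : G.D} : d ∈ G.fib w ↔ G.src d = w := by
  simp [fib]

lemma iterate_next_mem_fib {w : G.V} {d : G.D} (hd : d ∈ G.fib w) (n : ℕ) :
    (⇑G.next)^[n] d ∈ G.fib w := by
  rw [G.mem_fib] at hd ⊢; rw [G.src_iterate_next, hd]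

lemma iterate_period_mod {d₀ : G.D} {p : ℕ} (hp : (⇑G.next)^[p] d₀ = d₀) (m : ℕ) :
    (⇑G.next)^[m] d₀ = (⇑G.next)^[m % p] d₀ := by
  conv_lhs => rw [← Nat.mod_add_div m p, Function.iterate_add_apply,
    Function.iterate_mul]
  rw [Function.iterate_fixed hp]

lemma card_fib_le {d₀ : G.D} {p : ℕ} (hp : 0 < p) (h : (⇑G.next)^[p] d₀ = d₀) :
    (G.fib (G.src d₀)).card ≤ p := by
  have hsub : G.fib (G.src d₀) ⊆ (Finset.range p).image (fun j => (⇑G.next)^[j] d₀) := by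
    intro e he
    rw [G.mem_fib] at he
    obtain ⟨n, hn⟩ := G.next_cyclic d₀ e he.symm
    rw [Finset.mem_image]
    exact ⟨n % p, Finset.mem_range.mpr (Nat.mod_lt _ hp), by rw [← G.iterate_period_mod h, hn]⟩
  calc (G.fib (G.src d₀)).card ≤ _ := Finset.card_le_card hsub
    _ ≤ (Finset.range p).card := Finset.card_image_le
    _ = p := Finset.card_range p

lemma iterate_next_cancel {d₀ : G.D} {a b : ℕ} (h : (⇑G.next)^[a] d₀ = (⇑G.next)^[a + b] d₀) :
    (⇑G.next)^[b] d₀ = d₀ := by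
  rw [Function.iterate_add_apply] at h
  exact ((G.next.injective.iterate a) h).symm

lemma next_iterate_card_fib_aux {d₀ : G.D} {a b : ℕ}
    (hab : a < b) (hb : b ≤ (G.fib (G.src d₀)).card)
    (heq : (⇑G.next)^[a] d₀ = (⇑G.next)^[b] d₀) :
    (⇑G.next)^[(G.fib (G.src d₀)).card] d₀ = d₀ := by
  have hcan : (⇑G.next)^[b - a] d₀ = d₀ := by
    apply G.iterate_next_cancel (a := a)
    rwa [Nat.add_sub_cancel' hab.le]
  have hle := G.card_fib_le (by omega) hcan
  have hba : b - a = (G.fib (G.src d₀)).card := by omega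
  rwa [← hba]

lemma next_iterate_card_fib (d₀ : G.D) : (⇑G.next)^[(G.fib (G.src d₀)).card] d₀ = d₀ := by
  set c := (G.fib (G.src d₀)).card with hc
  have hmaps : ∀ j ∈ Finset.range (c + 1), (⇑G.next)^[j] d₀ ∈ G.fib (G.src d₀) := by
    intro j _; exact G.iterate_next_mem_fib (G.mem_fib.mpr rfl) j
  have hlt : (G.fib (G.src d₀)).card < (Finset.range (c+1)).card := by
    rw [Finset.card_range]; omega
  obtain ⟨a, ha, b, hb, hab, heq⟩ :=
    Finset.exists_ne_map_eq_of_card_lt_of_maps_to hlt hmaps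
  rw [Finset.mem_range] at ha hb
  rcases Nat.lt_or_ge a b with h | h
  · exact G.next_iterate_card_fib_aux h (by omega) heq
  · exact G.next_iterate_card_fib_aux (by omega) (by omega) heq.symm

lemma card_fib_pos (w : G.V) {d : G.D} (hd : G.src d = w) : 0 < (G.fib w).card :=
  Finset.card_pos.mpr ⟨d, G.mem_fib.mpr hd⟩

lemma next_iterate_eq_self_iff {d₀ : G.D} (m : ℕ) :
    (⇑G.next)^[m] d₀ = d₀ ↔ (G.fib (G.src d₀)).card ∣ m := by
  have hper := G.next_iterate_card_fib d₀
  have hpos : 0 < (G.fib (G.src d₀)).card := G.card_fib_pos _ rfl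
  constructor
  · intro h
    have hmod : (⇑G.next)^[m % (G.fib (G.src d₀)).card] d₀ = d₀ := by
      rw [← G.iterate_period_mod hper m]; exact h
    rcases Nat.eq_zero_or_pos (m % (G.fib (G.src d₀)).card) with h0 | h0
    · exact Nat.dvd_of_mod_eq_zero h0
    · have := G.card_fib_le h0 hmod
      have := Nat.mod_lt m hpos
      omega
  · rintro ⟨q, rfl⟩
    rw [Function.iterate_mul, Function.iterate_fixed hper]

end RibbonGraph
namespace RibbonGraph

variable (G : RibbonGraph)

lemma iterate_next_injOn_aux {d₀ : G.D} {a b : ℕ} (hab : a < b)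
    (hb : b - a < (G.fib (G.src d₀)).card) :
    (⇑G.next)^[a] d₀ ≠ (⇑G.next)^[b] d₀ := by
  intro heq
  have hcan : (⇑G.next)^[b - a] d₀ = d₀ := by
    apply G.iterate_next_cancel (a := a)
    rwa [Nat.add_sub_cancel' hab.le]
  have := G.card_fib_le (by omega) hcan
  omega

lemma sum_block (h : G.D → ℕ) {w : G.V} {d₀ : G.D} (hd : G.src d₀ = w) :
    ∑ j ∈ Finset.Icc 1 (G.fib w).card, h ((⇑G.next)^[j] d₀) = ∑ d ∈ G.fib w, h d := by
  subst hd
  set c := (G.fib (G.src d₀)).card with hc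
  have hinj : Set.InjOn (fun j => (⇑G.next)^[j] d₀) (Finset.Icc 1 c) := by
    intro a ha b hb heq
    simp only [Finset.coe_Icc, Set.mem_Icc] at ha hb
    by_contra hne
    rcases Nat.lt_or_ge a b with hlt | hge
    · exact G.iterate_next_injOn_aux hlt (by omega) heq
    · exact G.iterate_next_injOn_aux (by omega : b < a) (by omega) heq.symm
  have himg : (Finset.Icc 1 c).image (fun j => (⇑G.next)^[j] d₀) = G.fib (G.src d₀) := by
    apply Finset.eq_of_subset_of_card_le
    · intro e he
      rw [Finset.mem_image] at he
      obtain ⟨j, _, rfl⟩ := he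
      exact G.iterate_next_mem_fib (G.mem_fib.mpr rfl) j
    · rw [Finset.card_image_of_injOn hinj, Nat.card_Icc]; omega
  rw [← himg, Finset.sum_image (fun a ha b hb => hinj ha hb)]

lemma sum_full_turns (h : G.D → ℕ) {w : G.V} {d₀ : G.D} (hd : G.src d₀ = w) (q : ℕ) :
    ∑ j ∈ Finset.Icc 1 (q * (G.fib w).card), h ((⇑G.next)^[j] d₀)
      = q * ∑ d ∈ G.fib w, h d := by
  induction q with
  | zero => simp
  | succ q ih =>
    set c := (G.fib w).card with hc
    have hqc : (⇑G.next)^[q * c] d₀ = d₀ := by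
      rw [G.next_iterate_eq_self_iff]
      subst hd; exact dvd_mul_left c q
    have hIoc : ∑ j ∈ Finset.Ioc (q * c) (q * c + c), h ((⇑G.next)^[j] d₀)
        = ∑ j ∈ Finset.Icc 1 c, h ((⇑G.next)^[j] d₀) := by
      apply Finset.sum_nbij' (fun j => j - q * c) (fun j => j + q * c)
      · intro a ha; rw [Finset.mem_Ioc] at ha; rw [Finset.mem_Icc]; omega
      · intro a ha; rw [Finset.mem_Icc] at ha; rw [Finset.mem_Ioc]; omega
      · intro a ha; rw [Finset.mem_Ioc] at ha; omega
      · intro a ha; rw [Finset.mem_Icc] at ha; omega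
      · intro a ha
        rw [Finset.mem_Ioc] at ha
        have : a = (a - q * c) + q * c := by omega
        conv_lhs => rw [this, Function.iterate_add_apply, hqc]
    have hsplit : ∑ j ∈ Finset.Ioc 0 (q * c), h ((⇑G.next)^[j] d₀)
          + ∑ j ∈ Finset.Ioc (q * c) (q * c + c), h ((⇑G.next)^[j] d₀)
        = ∑ j ∈ Finset.Ioc 0 (q * c + c), h ((⇑G.next)^[j] d₀) :=
      Finset.sum_Ioc_consecutive _ (by omega) (by omega)
    have hicc : ∀ n : ℕ, Finset.Icc 1 n = Finset.Ioc 0 n := fun n => Finset.Icc_add_one_left_eq_Ioc 0 n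
    rw [Nat.succ_mul, hicc, ← hsplit, ← hicc, ih, hIoc, hicc, ← hicc, G.sum_block h hd]
    ring

end RibbonGraph
namespace RibbonGraph

variable (G : RibbonGraph) (C : G.DirCycle)

lemma dc_len_pos : 0 < C.darts.length := List.length_pos_iff.mpr C.ne

lemma dc_get_eq {i j : ℕ} (hi : i < C.darts.length) (hj : j < C.darts.length)
    (hij : i = j) : C.darts.get ⟨i, hi⟩ = C.darts.get ⟨j, hj⟩ := by
  subst hij; rfl

lemma dc_succ (i : ℕ) (h : i < C.darts.length) :
    G.tgt (C.darts.get ⟨i, h⟩)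
      = G.src (C.darts.get ⟨(i+1) % C.darts.length,
          Nat.mod_lt _ (G.dc_len_pos C)⟩) := by
  rcases Nat.lt_or_ge (i+1) C.darts.length with h1 | h1
  · have hm : (i+1) % C.darts.length = i + 1 := Nat.mod_eq_of_lt h1
    have := List.isChain_iff_getElem.mp C.chain i (by omega)
    simp only [hm]
    exact this
  · have hi : i = C.darts.length - 1 := by omega
    have hm : (i+1) % C.darts.length = 0 := by
      have : i + 1 = C.darts.length := by omega
      rw [this, Nat.mod_self]
    simp only [hm]
    have hlast : C.darts.get ⟨i, h⟩ = C.darts.getLast C.ne := by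
      subst hi; exact List.get_length_sub_one _
    have hhead : C.darts.get ⟨0, G.dc_len_pos C⟩ = C.darts.head C.ne := by
      rw [List.head_eq_getElem_zero]; rfl
    rw [hlast, hhead]
    exact C.wrap

lemma mem_cverts {u : G.V} :
    u ∈ G.cverts C ↔ ∃ i : ℕ, ∃ h : i < C.darts.length, G.src (C.darts.get ⟨i, h⟩) = u := by
  unfold cverts
  rw [List.mem_map]
  constructor
  · rintro ⟨d, hd, rfl⟩
    obtain ⟨i, hi⟩ := List.mem_iff_get.mp hd
    exact ⟨i.1, i.2, by rw [hi]⟩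
  · rintro ⟨i, h, rfl⟩
    exact ⟨_, List.get_mem _ _, rfl⟩

lemma rotor_on_cycle {ρ : G.RotorConfig} (hC : G.IsCycleOf ρ C) (i : ℕ)
    (h : i < C.darts.length) :
    ρ.1 (G.src (C.darts.get ⟨i, h⟩)) = C.darts.get ⟨i, h⟩ :=
  hC.1 _ (List.get_mem _ _)

lemma cfg_iter {ρ : G.RotorConfig} (hC : G.IsCycleOf ρ C) (j : ℕ) :
    ∀ (i : ℕ) (h : i < C.darts.length),
      (G.cfgStep ρ)^[j] (G.src (C.darts.get ⟨i, h⟩))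
        = G.src (C.darts.get ⟨(i + j) % C.darts.length,
            Nat.mod_lt _ (G.dc_len_pos C)⟩) := by
  induction j with
  | zero =>
    intro i h
    simp [Nat.mod_eq_of_lt h]
  | succ j ih =>
    intro i h
    rw [Function.iterate_succ_apply]
    have hstep : G.cfgStep ρ (G.src (C.darts.get ⟨i, h⟩))
        = G.src (C.darts.get ⟨(i+1) % C.darts.length, Nat.mod_lt _ (G.dc_len_pos C)⟩) := by
      unfold cfgStep
      rw [G.rotor_on_cycle C hC i h]
      exact G.dc_succ C i h
    rw [hstep, ih]
    exact congrArg G.src (G.dc_get_eq C _ _ (by rw [Nat.mod_add_mod]; congr 1; omega))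

lemma periodic_of_mem_cverts {ρ : G.RotorConfig} (hC : G.IsCycleOf ρ C) {u : G.V}
    (hu : u ∈ G.cverts C) : G.Periodic ρ u := by
  obtain ⟨i, h, rfl⟩ := (G.mem_cverts C).mp hu
  refine ⟨C.darts.length, G.dc_len_pos C, ?_⟩
  rw [G.cfg_iter C hC]
  exact congrArg G.src (G.dc_get_eq C _ _ (by rw [Nat.add_mod_right]; exact Nat.mod_eq_of_lt h))

lemma not_periodic_of_not_mem {ρ : G.RotorConfig} (hC : G.IsCycleOf ρ C) {u : G.V}
    (hu : u ∉ G.cverts C) : ¬ G.Periodic ρ u := fun hp => hu (hC.2 u hp)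

lemma sigma_rotor {ρ σ : G.RotorConfig} (hC : G.IsCycleOf ρ C) (hR : G.IsReversal ρ σ)
    (i : ℕ) (h : i < C.darts.length) :
    σ.1 (G.src (C.darts.get ⟨(i+1) % C.darts.length, Nat.mod_lt _ (G.dc_len_pos C)⟩))
      = G.rev (C.darts.get ⟨i, h⟩) := by
  have hper : G.Periodic ρ (G.src (C.darts.get ⟨i, h⟩)) :=
    G.periodic_of_mem_cverts C hC ((G.mem_cverts C).mpr ⟨i, h, rfl⟩)
  have := hR.2 _ hper
  rw [G.rotor_on_cycle C hC i h] at this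
  rw [← this, G.dc_succ C i h]

lemma sigma_rotor' {ρ σ : G.RotorConfig} (hC : G.IsCycleOf ρ C) (hR : G.IsReversal ρ σ)
    (i : ℕ) (h : i < C.darts.length) :
    σ.1 (G.src (C.darts.get ⟨i, h⟩))
      = G.rev (C.darts.get ⟨(i + C.darts.length - 1) % C.darts.length,
          Nat.mod_lt _ (G.dc_len_pos C)⟩) := by
  have hL := G.dc_len_pos C
  have key := G.sigma_rotor C hC hR ((i + C.darts.length - 1) % C.darts.length)
    (Nat.mod_lt _ hL)
  have harith : ((i + C.darts.length - 1) % C.darts.length + 1) % C.darts.length = i := by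
    rw [Nat.mod_add_mod]
    have : i + C.darts.length - 1 + 1 = i + C.darts.length := by omega
    rw [this, Nat.add_mod_right, Nat.mod_eq_of_lt h]
  rw [← key]
  exact congrArg (fun x => σ.1 (G.src x)) (G.dc_get_eq C _ _ harith.symm)

lemma tgt_sigma {ρ σ : G.RotorConfig} (hC : G.IsCycleOf ρ C) (hR : G.IsReversal ρ σ)
    (i : ℕ) (h : i < C.darts.length) :
    G.tgt (σ.1 (G.src (C.darts.get ⟨i, h⟩)))
      = G.src (C.darts.get ⟨(i + C.darts.length - 1) % C.darts.length,
          Nat.mod_lt _ (G.dc_len_pos C)⟩) := by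
  rw [G.sigma_rotor' C hC hR i h, G.tgt_rev]

end RibbonGraph
namespace RibbonGraph

variable (G : RibbonGraph) (τ : G.RotorConfig) (v : G.V)

/-- chip position at time `t` of the rotor walk started at `(τ, v)`. -/
def wpos (t : ℕ) : G.V := ((G.rrStep)^[t] (τ, v)).2

/-- rotor configuration at time `t`. -/
def wcfg (t : ℕ) : G.RotorConfig := ((G.rrStep)^[t] (τ, v)).1

/-- number of departures from `u` during the first `t` steps. -/
def cnt (t : ℕ) (u : G.V) : ℕ :=
  ((Finset.range t).filter (fun i => G.wpos τ v i = u)).card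

/-- number of arrivals at `u` prescribed by a count vector `c`. -/
def Arr (c : G.V → ℕ) (u : G.V) : ℕ :=
  ∑ w : G.V, ((Finset.Icc 1 (c w)).filter
    (fun j => G.tgt ((⇑G.next)^[j] (τ.1 w)) = u)).card

lemma wpos_zero : G.wpos τ v 0 = v := rfl

lemma wcfg_zero : G.wcfg τ v 0 = τ := rfl

lemma cnt_zero (u : G.V) : G.cnt τ v 0 u = 0 := by simp [cnt]

lemma cnt_succ (t : ℕ) (u : G.V) :
    G.cnt τ v (t+1) u = G.cnt τ v t u + if G.wpos τ v t = u then 1 else 0 := by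
  unfold cnt
  rw [Finset.range_add_one, Finset.filter_insert]
  split
  · rw [Finset.card_insert_of_notMem (by simp)]
  · simp

lemma wcfg_succ_apply (t : ℕ) (u : G.V) :
    (G.wcfg τ v (t+1)).1 u
      = if u = G.wpos τ v t then G.next ((G.wcfg τ v t).1 (G.wpos τ v t))
        else (G.wcfg τ v t).1 u := by
  unfold wcfg wpos
  rw [Function.iterate_succ_apply']
  rfl

lemma wpos_succ' (t : ℕ) :
    G.wpos τ v (t+1) = G.tgt (G.next ((G.wcfg τ v t).1 (G.wpos τ v t))) := by
  unfold wcfg wpos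
  rw [Function.iterate_succ_apply']
  rfl

lemma rotor_eq (t : ℕ) (u : G.V) :
    (G.wcfg τ v t).1 u = (⇑G.next)^[G.cnt τ v t u] (τ.1 u) := by
  induction t with
  | zero => rfl
  | succ t ih =>
    rw [G.wcfg_succ_apply, G.cnt_succ]
    by_cases h : u = G.wpos τ v t
    · rw [if_pos h, if_pos h.symm]
      subst h
      rw [ih]
      exact (Function.iterate_succ_apply' _ _ _).symm
    · rw [if_neg h, if_neg (fun hh => h hh.symm), Nat.add_zero, ih]

lemma wpos_succ (t : ℕ) :
    G.wpos τ v (t+1)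
      = G.tgt ((⇑G.next)^[G.cnt τ v t (G.wpos τ v t) + 1] (τ.1 (G.wpos τ v t))) := by
  rw [G.wpos_succ', G.rotor_eq]
  exact congrArg G.tgt (Function.iterate_succ_apply' _ _ _).symm

lemma sum_cnt (t : ℕ) : ∑ u : G.V, G.cnt τ v t u = t := by
  induction t with
  | zero => simp [cnt_zero]
  | succ t ih =>
    have : ∀ u, G.cnt τ v (t+1) u = G.cnt τ v t u + if G.wpos τ v t = u then 1 else 0 :=
      G.cnt_succ τ v t
    simp only [this]
    rw [Finset.sum_add_distrib, ih, Finset.sum_ite_eq (Finset.univ) (G.wpos τ v t)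
      (fun _ => 1)]
    simp

lemma Arr_mono {c c' : G.V → ℕ} (h : ∀ w, c w ≤ c' w) (u : G.V) :
    G.Arr τ c u ≤ G.Arr τ c' u := by
  apply Finset.sum_le_sum
  intro w _
  apply Finset.card_le_card
  apply Finset.filter_subset_filter
  exact Finset.Icc_subset_Icc_right (h w)

lemma flow (t : ℕ) (u : G.V) :
    G.cnt τ v t u + (if G.wpos τ v t = u then 1 else 0)
      = (if v = u then 1 else 0) + G.Arr τ (G.cnt τ v t) u := by
  induction t with
  | zero =>
    simp only [cnt_zero, wpos_zero, Nat.zero_add]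
    have : G.Arr τ (G.cnt τ v 0) u = 0 := by
      unfold Arr
      apply Finset.sum_eq_zero
      intro w _
      rw [cnt_zero]
      simp
    rw [this]
    by_cases hvu : v = u <;> simp [hvu]
  | succ t ih =>
    have harr : G.Arr τ (G.cnt τ v (t+1)) u
        = G.Arr τ (G.cnt τ v t) u
          + (if G.tgt ((⇑G.next)^[G.cnt τ v t (G.wpos τ v t) + 1] (τ.1 (G.wpos τ v t))) = u
              then 1 else 0) := by
      unfold Arr
      have hsum : (if G.tgt ((⇑G.next)^[G.cnt τ v t (G.wpos τ v t) + 1]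
              (τ.1 (G.wpos τ v t))) = u then 1 else 0)
          = ∑ w : G.V, if G.wpos τ v t = w then
              (if G.tgt ((⇑G.next)^[G.cnt τ v t (G.wpos τ v t) + 1]
                (τ.1 (G.wpos τ v t))) = u then 1 else 0) else 0 := by
        rw [Finset.sum_ite_eq]
        simp
      rw [hsum, ← Finset.sum_add_distrib]
      apply Finset.sum_congr rfl
      intro w _
      by_cases hw : G.wpos τ v t = w
      · subst hw
        rw [if_pos rfl, G.cnt_succ, if_pos rfl]
        have hicc : Finset.Icc 1 (G.cnt τ v t (G.wpos τ v t) + 1)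
            = insert (G.cnt τ v t (G.wpos τ v t) + 1)
                (Finset.Icc 1 (G.cnt τ v t (G.wpos τ v t))) := by
          ext j
          simp only [Finset.mem_Icc, Finset.mem_insert]
          omega
        rw [hicc, Finset.filter_insert]
        split
        · rw [Finset.card_insert_of_notMem (by simp)]
        · rw [Nat.add_zero]
      · rw [G.cnt_succ, if_neg hw, if_neg hw, Nat.add_zero, Nat.add_zero]
    rw [harr, G.cnt_succ, ← G.wpos_succ]
    omega

end RibbonGraph
namespace RibbonGraph

variable (G : RibbonGraph) (τ : G.RotorConfig) (v : G.V)

lemma Arr_lt {k c : G.V → ℕ} (hle : ∀ w, c w ≤ k w) {w₀ : G.V} (hw₀ : c w₀ < k w₀)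
    {y : G.V} (hy : G.tgt ((⇑G.next)^[k w₀] (τ.1 w₀)) = y) :
    G.Arr τ c y < G.Arr τ k y := by
  unfold Arr
  apply Finset.sum_lt_sum
  · intro w _
    exact Finset.card_le_card
      (Finset.filter_subset_filter _ (Finset.Icc_subset_Icc_right (hle w)))
  · refine ⟨w₀, Finset.mem_univ _, ?_⟩
    apply Finset.card_lt_card
    rw [Finset.ssubset_iff_of_subset
      (Finset.filter_subset_filter _ (Finset.Icc_subset_Icc_right (hle w₀)))]
    refine ⟨k w₀, ?_, ?_⟩
    · rw [Finset.mem_filter, Finset.mem_Icc]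
      exact ⟨⟨by omega, le_rfl⟩, hy⟩
    · rw [Finset.mem_filter, Finset.mem_Icc]
      intro ⟨⟨_, hje⟩, _⟩
      omega

lemma no_overshoot (σ : G.RotorConfig) (k : G.V → ℕ)
    (h1 : ∀ u, G.Arr τ k u = k u)
    (h2 : ∀ u, (⇑G.next)^[k u] (τ.1 u) = σ.1 u)
    (h3 : ∀ x : G.V, Relation.ReflTransGen (fun a b => b = G.tgt (σ.1 a)) x v) :
    ∀ t, t ≤ ∑ u : G.V, k u → ∀ u, G.cnt τ v t u ≤ k u := by
  intro t
  induction t with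
  | zero => intro _ u; rw [cnt_zero]; omega
  | succ t ih =>
    intro ht u
    have hle : ∀ w, G.cnt τ v t w ≤ k w := ih (by omega)
    rw [G.cnt_succ]
    by_cases hx : G.wpos τ v t = u
    · rw [if_pos hx]
      rcases Nat.lt_or_ge (G.cnt τ v t u) (k u) with h | h
      · omega
      · exfalso
        have hcnt_u : G.cnt τ v t u = k u := le_antisymm (hle u) h
        have hf := G.flow τ v t u
        rw [if_pos hx] at hf
        have harr_le : G.Arr τ (G.cnt τ v t) u ≤ k u := (G.Arr_mono τ hle u).trans_eq (h1 u)
        have hvu : v = u := by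
          by_contra hvu
          rw [if_neg hvu] at hf
          omega
        subst hvu
        rw [if_pos rfl] at hf
        have harr_eq : G.Arr τ (G.cnt τ v t) v = k v := by omega
        have hS : ∀ a b : G.V, G.cnt τ v t a < k a → b = G.tgt (σ.1 a) →
            G.cnt τ v t b < k b := by
          intro a b ha hb
          have hlt : G.Arr τ (G.cnt τ v t) b < G.Arr τ k b :=
            G.Arr_lt τ hle ha (by rw [h2 a, ← hb])
          rw [h1 b] at hlt
          by_cases hbv : b = v
          · subst hbv; omega
          · have hfb := G.flow τ v t b
            rw [if_neg (show ¬(v = b) from fun hh => hbv hh.symm)] at hfb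
            omega
        by_cases hSe : ∀ w, G.cnt τ v t w = k w
        · have hts : t = ∑ u : G.V, k u := by
            rw [← G.sum_cnt τ v t]
            exact Finset.sum_congr rfl (fun w _ => hSe w)
          omega
        · push_neg at hSe
          obtain ⟨x₀, hx₀⟩ := hSe
          have hx₀' : G.cnt τ v t x₀ < k x₀ := lt_of_le_of_ne (hle x₀) hx₀
          have hprop : ∀ a b : G.V,
              Relation.ReflTransGen (fun a b => b = G.tgt (σ.1 a)) a b →
              G.cnt τ v t a < k a → G.cnt τ v t b < k b := by
            intro a b hab
            induction hab with
            | refl => exact id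
            | tail hab hbc ihh => exact fun ha => hS _ _ (ihh ha) hbc
          have := hprop x₀ v (h3 x₀) hx₀'
          omega
    · rw [if_neg hx, Nat.add_zero]
      exact hle u

lemma walk_realizes (σ : G.RotorConfig) (k : G.V → ℕ)
    (h1 : ∀ u, G.Arr τ k u = k u)
    (h2 : ∀ u, (⇑G.next)^[k u] (τ.1 u) = σ.1 u)
    (h3 : ∀ x : G.V, Relation.ReflTransGen (fun a b => b = G.tgt (σ.1 a)) x v) :
    (G.rrStep)^[∑ u : G.V, k u] (τ, v) = (σ, v) := by
  have hub := G.no_overshoot τ v σ k h1 h2 h3 (∑ u : G.V, k u) le_rfl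
  have hsum : ∑ u : G.V, G.cnt τ v (∑ u : G.V, k u) u = ∑ u : G.V, k u :=
    G.sum_cnt τ v _
  have hcnt : ∀ u, G.cnt τ v (∑ u : G.V, k u) u = k u := by
    intro u
    exact (Finset.sum_eq_sum_iff_of_le (fun w _ => hub w)).mp hsum u (Finset.mem_univ u)
  have hcfg : G.wcfg τ v (∑ u : G.V, k u) = σ := by
    apply Subtype.ext
    funext u
    rw [G.rotor_eq, hcnt u, h2 u]
  have hchip : G.wpos τ v (∑ u : G.V, k u) = v := by
    have hf := G.flow τ v (∑ u : G.V, k u) (G.wpos τ v (∑ u : G.V, k u))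
    have hAk : G.Arr τ (G.cnt τ v (∑ u : G.V, k u)) (G.wpos τ v (∑ u : G.V, k u))
        = k (G.wpos τ v (∑ u : G.V, k u)) := by
      have hck : G.cnt τ v (∑ u : G.V, k u) = k := funext hcnt
      rw [hck, h1]
    rw [if_pos rfl, hcnt, hAk] at hf
    by_contra hne
    rw [if_neg (show ¬(v = G.wpos τ v (∑ u : G.V, k u)) from fun hh => hne hh.symm)] at hf
    omega
  have hpair : (G.rrStep)^[∑ u : G.V, k u] (τ, v)
      = (G.wcfg τ v (∑ u : G.V, k u), G.wpos τ v (∑ u : G.V, k u)) := rfl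
  rw [hpair, hcfg, hchip]

end RibbonGraph
namespace RibbonGraph

variable (G : RibbonGraph)

lemma rotor_eq_on_cycle (C : G.DirCycle) {ρ ρ' : G.RotorConfig}
    (hCρ : G.IsCycleOf ρ C) (hCρ' : G.IsCycleOf ρ' C) {w : G.V}
    (hw : w ∈ G.cverts C) : ρ.1 w = ρ'.1 w := by
  obtain ⟨i, h, rfl⟩ := (G.mem_cverts C).mp hw
  rw [G.rotor_on_cycle C hCρ i h, G.rotor_on_cycle C hCρ' i h]

lemma sigma_eq_on_cycle (C : G.DirCycle) {ρ ρ' σ σ' : G.RotorConfig}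
    (hCρ : G.IsCycleOf ρ C) (hCρ' : G.IsCycleOf ρ' C)
    (hR : G.IsReversal ρ σ) (hR' : G.IsReversal ρ' σ') {w : G.V}
    (hw : w ∈ G.cverts C) : σ.1 w = σ'.1 w := by
  obtain ⟨i, h, rfl⟩ := (G.mem_cverts C).mp hw
  rw [G.sigma_rotor' C hCρ hR i h, G.sigma_rotor' C hCρ' hR' i h]

lemma Arr_congr (C : G.DirCycle) {ρ ρ' : G.RotorConfig}
    (hCρ : G.IsCycleOf ρ C) (hCρ' : G.IsCycleOf ρ' C) (k : G.V → ℕ)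
    (hdvd : ∀ u, u ∉ G.cverts C → (G.fib u).card ∣ k u) (u : G.V) :
    G.Arr ρ k u = G.Arr ρ' k u := by
  unfold Arr
  apply Finset.sum_congr rfl
  intro w _
  by_cases hw : w ∈ G.cverts C
  · rw [G.rotor_eq_on_cycle C hCρ hCρ' hw]
  · obtain ⟨q, hq⟩ := hdvd w hw
    rw [Finset.card_filter, Finset.card_filter]
    have hsrc : G.src (ρ.1 w) = w := ρ.2 w
    have hsrc' : G.src (ρ'.1 w) = w := ρ'.2 w
    have e1 := G.sum_full_turns (fun d => if G.tgt d = u then 1 else 0) hsrc q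
    have e2 := G.sum_full_turns (fun d => if G.tgt d = u then 1 else 0) hsrc' q
    have hq' : k w = q * (G.fib w).card := by rw [hq, Nat.mul_comm]
    rw [hq', e1, e2]

lemma reach_chain (C : G.DirCycle) {τ σ : G.RotorConfig} (hC : G.IsCycleOf τ C)
    (hR : G.IsReversal τ σ) {v : G.V} (hv : v ∈ G.cverts C) (x : G.V) :
    Relation.ReflTransGen (fun a b => b = G.tgt (σ.1 a)) x v := by
  set R := fun a b : G.V => b = G.tgt (σ.1 a) with hRdef
  have hL : 0 < C.darts.length := G.dc_len_pos C
  obtain ⟨i₀, h₀, hv₀⟩ := (G.mem_cverts C).mp hv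
  have JLEM : ∀ j : ℕ, Relation.ReflTransGen R
      (G.src (C.darts.get ⟨(i₀ + j) % C.darts.length, Nat.mod_lt _ hL⟩)) v := by
    intro j
    induction j with
    | zero =>
      have : G.src (C.darts.get ⟨(i₀ + 0) % C.darts.length, Nat.mod_lt _ hL⟩) = v := by
        rw [← hv₀]
        exact congrArg G.src (G.dc_get_eq C _ _ (by rw [Nat.add_zero, Nat.mod_eq_of_lt h₀]))
      rw [this]
    | succ j ih =>
      apply Relation.ReflTransGen.head _ ih
      show G.src (C.darts.get ⟨(i₀ + j) % C.darts.length, Nat.mod_lt _ hL⟩)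
          = G.tgt (σ.1 (G.src (C.darts.get ⟨(i₀ + (j+1)) % C.darts.length, Nat.mod_lt _ hL⟩)))
      rw [G.tgt_sigma C hC hR _ (Nat.mod_lt _ hL)]
      apply congrArg G.src
      apply G.dc_get_eq
      have hsub : (i₀ + (j+1)) % C.darts.length + C.darts.length - 1
          = (i₀ + (j+1)) % C.darts.length + (C.darts.length - 1) := by omega
      rw [hsub, Nat.mod_add_mod,
        show i₀ + (j + 1) + (C.darts.length - 1) = i₀ + j + C.darts.length from by omega,
        Nat.add_mod_right]
  have cyc_reach : ∀ u, u ∈ G.cverts C → Relation.ReflTransGen R u v := by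
    intro u hu
    obtain ⟨i, h, rfl⟩ := (G.mem_cverts C).mp hu
    have := JLEM (C.darts.length + i - i₀)
    have harith : (i₀ + (C.darts.length + i - i₀)) % C.darts.length = i := by
      have : i₀ + (C.darts.length + i - i₀) = C.darts.length + i := by omega
      rw [this, Nat.add_comm, Nat.add_mod_right, Nat.mod_eq_of_lt h]
    rwa [show G.src (C.darts.get ⟨(i₀ + (C.darts.length + i - i₀)) % C.darts.length,
        Nat.mod_lt _ hL⟩) = G.src (C.darts.get ⟨i, h⟩) from
      congrArg G.src (G.dc_get_eq C _ _ harith)] at this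
  have noncyc : ∀ (n : ℕ) (x : G.V), (G.cfgStep τ)^[n] x ∈ G.cverts C →
      Relation.ReflTransGen R x v := by
    intro n
    induction n with
    | zero => exact fun x hx => cyc_reach x hx
    | succ n ih =>
      intro x hx
      by_cases hxc : x ∈ G.cverts C
      · exact cyc_reach x hxc
      · have hστ : σ.1 x = τ.1 x := hR.1 x (G.not_periodic_of_not_mem C hC hxc)
        refine Relation.ReflTransGen.head (b := G.cfgStep τ x)
          (show G.cfgStep τ x = G.tgt (σ.1 x) by rw [hστ]; rfl) (ih _ ?_)
        rwa [← Function.iterate_succ_apply]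
  obtain ⟨n, hn⟩ : ∃ n : ℕ, (G.cfgStep τ)^[n] x ∈ G.cverts C := by
    obtain ⟨a, b, hab, heq⟩ :=
      Finite.exists_ne_map_eq_of_infinite (fun n : ℕ => (G.cfgStep τ)^[n] x)
    rcases Nat.lt_or_ge a b with h | h
    · refine ⟨a, hC.2 _ ⟨b - a, by omega, ?_⟩⟩
      rw [← Function.iterate_add_apply]
      rw [show b - a + a = b from by omega]
      exact heq.symm
    · have hba : b < a := by omega
      refine ⟨b, hC.2 _ ⟨a - b, by omega, ?_⟩⟩
      rw [← Function.iterate_add_apply]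
      rw [show a - b + b = a from by omega]
      exact heq
  exact noncyc n x hn

end RibbonGraph
/-- reversibility of a cycle is well-defined: if for some unicycle
`(ρ', v')` with unique directed cycle `C` the cycle-reversed state is reachable,
then the same holds for every unicycle with unique directed cycle `C`. -/
theorem reversibility_well_defined (G : RibbonGraph) (C : G.DirCycle)
    (ρ' : G.RotorConfig) (v' : G.V) (σ' : G.RotorConfig)
    (hC' : G.IsCycleOf ρ' C) (hv' : v' ∈ G.cverts C)
    (hσ' : G.IsReversal ρ' σ') (hreach' : G.Reaches (ρ', v') (σ', v')) :
    G.Reversible C := by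
  intro ρ v σ hC hv hR
  obtain ⟨n, hn, hB⟩ := hreach'
  have hBc : G.wcfg ρ' v' n = σ' := congrArg Prod.fst hB
  have hBp : G.wpos ρ' v' n = v' := congrArg Prod.snd hB
  have hrot' : ∀ u, (⇑G.next)^[G.cnt ρ' v' n u] (ρ'.1 u) = σ'.1 u := by
    intro u
    rw [← G.rotor_eq ρ' v' n u, hBc]
  have hdvd : ∀ u, u ∉ G.cverts C → (G.fib u).card ∣ G.cnt ρ' v' n u := by
    intro u hu
    have hσρ : σ'.1 u = ρ'.1 u := hσ'.1 u (G.not_periodic_of_not_mem C hC' hu)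
    have hfix : (⇑G.next)^[G.cnt ρ' v' n u] (ρ'.1 u) = ρ'.1 u := by
      rw [hrot' u, hσρ]
    have hcard := (G.next_iterate_eq_self_iff (d₀ := ρ'.1 u) (G.cnt ρ' v' n u)).mp hfix
    rwa [ρ'.2 u] at hcard
  have h2 : ∀ u, (⇑G.next)^[G.cnt ρ' v' n u] (ρ.1 u) = σ.1 u := by
    intro u
    by_cases hu : u ∈ G.cverts C
    · rw [G.rotor_eq_on_cycle C hC hC' hu, hrot' u]
      exact (G.sigma_eq_on_cycle C hC hC' hR hσ' hu).symm
    · have hσρ : σ.1 u = ρ.1 u := hR.1 u (G.not_periodic_of_not_mem C hC hu)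
      rw [hσρ]
      apply (G.next_iterate_eq_self_iff _).mpr
      rw [ρ.2 u]
      exact hdvd u hu
  have h1 : ∀ u, G.Arr ρ (G.cnt ρ' v' n) u = G.cnt ρ' v' n u := by
    intro u
    have hfl := G.flow ρ' v' n u
    rw [hBp] at hfl
    have hA' : G.Arr ρ' (G.cnt ρ' v' n) u = G.cnt ρ' v' n u := by omega
    rw [G.Arr_congr C hC hC' (G.cnt ρ' v' n) hdvd u, hA']
  have h3 := fun x => G.reach_chain C hC hR hv x
  have hpos : 0 < ∑ u : G.V, G.cnt ρ' v' n u := by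
    rw [G.sum_cnt ρ' v' n]
    exact hn
  exact ⟨∑ u : G.V, G.cnt ρ' v' n u, hpos,
    G.walk_realizes ρ v σ (G.cnt ρ' v' n) h1 h2 h3⟩
end

section
/- Every separating cycle in a connected ribbon graph is reversible: if no path witnesses that the cycle C is nonseparating, then for any unicycle (ρ, v) with C(ρ) = C, the configuration (ρ̄, v) obtained by reversing the edges of C is reachable from (ρ, v) by rotor-routing. -/
namespace RRProof
open RibbonGraph Finset

variable {G : RibbonGraph}

lemma src_iter (G : RibbonGraph) (k : ℕ) (d : G.D) :
    G.src ((⇑G.next)^[k] d) = G.src d := by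
  induction k with
  | zero => rfl
  | succ n ih => rw [Function.iterate_succ_apply', G.src_next, ih]

lemma exists_pos_iter (G : RibbonGraph) (d e : G.D) (h : G.src d = G.src e) :
    ∃ k, 1 ≤ k ∧ (⇑G.next)^[k] d = e := by
  obtain ⟨n, hn⟩ := G.next_cyclic d e h
  rcases Nat.eq_zero_or_pos n with h0 | h0
  · subst h0
    refine ⟨orderOf G.next, ?_, ?_⟩
    · exact orderOf_pos G.next
    · rw [Equiv.Perm.iterate_eq_pow, pow_orderOf_eq_one]
      simpa using hn
  · exact ⟨n, h0, hn⟩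

/-- number of darts at a vertex -/
def degd (G : RibbonGraph) (u : G.V) : ℕ :=
  (Finset.univ.filter (fun d => G.src d = u)).card

lemma degd_pos (G : RibbonGraph) (d : G.D) : 0 < degd G (G.src d) := by
  apply Finset.card_pos.2
  exact ⟨d, by simp⟩

/-- iterate multiples of a period -/
lemma iterate_period_mul {α : Type*} (f : α → α) (p : ℕ) (x : α) (h : f^[p] x = x) (k : ℕ) :
    f^[p * k] x = x := by
  induction k with
  | zero => rw [Nat.mul_zero]; rfl
  | succ n ih => rw [Nat.mul_succ, Function.iterate_add_apply, h]; exact ih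

lemma period_eq_degd (G : RibbonGraph) (d : G.D) :
    ∃ hp : ∃ m, 1 ≤ m ∧ (⇑G.next)^[m] d = d,
      Nat.find hp = degd G (G.src d) := by
  have hp : ∃ m, 1 ≤ m ∧ (⇑G.next)^[m] d = d := exists_pos_iter G d d rfl
  refine ⟨hp, ?_⟩
  set p := Nat.find hp with hpdef
  have hspec := Nat.find_spec hp
  have hmin : ∀ m, 1 ≤ m → m < p → (⇑G.next)^[m] d ≠ d := by
    intro m h1 h2 he
    exact Nat.find_min hp h2 ⟨h1, he⟩
  -- injectivity of k ↦ next^[k] d on [0, p)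
  have hinj : ∀ i j, i < p → j < p → (⇑G.next)^[i] d = (⇑G.next)^[j] d → i = j := by
    intro i j hi hj hij
    by_contra hne
    wlog hlt : i < j generalizing i j
    · exact this j i hj hi hij.symm (Ne.symm hne) (by omega)
    · have : (⇑G.next)^[j - i] d = d := by
        have h1 : (⇑G.next)^[j - i] ((⇑G.next)^[i] d) = (⇑G.next)^[j] d := by
          rw [← Function.iterate_add_apply]
          congr 1
          omega
        rw [hij] at h1
        -- next^[j-i] fixes next^[j] d hence fixes d
        have h2 : (⇑G.next)^[j - i] ((⇑G.next)^[j] d) = (⇑G.next)^[j] d := h1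
        have h3 : (⇑G.next)^[j] ((⇑G.next)^[j - i] d) = (⇑G.next)^[j] d := by
          rw [← Function.iterate_add_apply, Nat.add_comm, Function.iterate_add_apply, h2]
        have hinj2 : Function.Injective ((⇑G.next)^[j]) :=
          Function.Injective.iterate G.next.injective j
        exact hinj2 h3
      exact hmin (j - i) (by omega) (by omega) this
  -- surjectivity of range p onto the fiber
  have hsurj : ∀ e, G.src e = G.src d → ∃ k, k < p ∧ (⇑G.next)^[k] d = e := by
    intro e he
    obtain ⟨n, hn⟩ := G.next_cyclic d e he.symm
    refine ⟨n % p, Nat.mod_lt _ (by omega), ?_⟩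
    have heq : n % p + p * (n / p) = n := by
      rw [Nat.add_comm]; exact Nat.div_add_mod n p
    rw [← heq, Function.iterate_add_apply, iterate_period_mul _ p d hspec.2] at hn
    exact hn
  -- cardinality
  have himage : (Finset.univ.filter (fun e => G.src e = G.src d)) =
      (Finset.range p).image (fun k => (⇑G.next)^[k] d) := by
    ext e
    simp only [Finset.mem_filter, Finset.mem_univ, true_and, Finset.mem_image,
      Finset.mem_range]
    constructor
    · intro he
      obtain ⟨k, hk, hke⟩ := hsurj e he
      exact ⟨k, hk, hke⟩
    · rintro ⟨k, _, rfl⟩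
      exact src_iter G k d
  have : degd G (G.src d) = p := by
    rw [degd, himage, Finset.card_image_of_injOn, Finset.card_range]
    intro i hi j hj hij
    exact hinj i j (Finset.mem_range.1 hi) (Finset.mem_range.1 hj) hij
  omega

lemma iterate_degd (G : RibbonGraph) (d : G.D) :
    (⇑G.next)^[degd G (G.src d)] d = d := by
  obtain ⟨hp, hEq⟩ := period_eq_degd G d
  rw [← hEq]
  exact (Nat.find_spec hp).2

lemma iter_inj_Icc (G : RibbonGraph) (d : G.D) (i j : ℕ)
    (hi1 : 1 ≤ i) (hi2 : i ≤ degd G (G.src d)) (hj1 : 1 ≤ j) (hj2 : j ≤ degd G (G.src d))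
    (h : (⇑G.next)^[i] d = (⇑G.next)^[j] d) : i = j := by
  obtain ⟨hp, hEq⟩ := period_eq_degd G (G.next d)
  have hsrc : G.src (G.next d) = G.src d := G.src_next d
  rw [hsrc] at hEq
  have hspec := Nat.find_spec hp
  have hmin : ∀ m, 1 ≤ m → m < Nat.find hp → (⇑G.next)^[m] (G.next d) ≠ G.next d :=
    fun m h1 h2 he => Nat.find_min hp h2 ⟨h1, he⟩
  -- injectivity on [0, p) for base point next d
  have hinj : ∀ a b, a < Nat.find hp → b < Nat.find hp →
      (⇑G.next)^[a] (G.next d) = (⇑G.next)^[b] (G.next d) → a = b := by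
    intro a b ha hb hab
    by_contra hne
    wlog hlt : a < b generalizing a b
    · exact this b a hb ha hab.symm (Ne.symm hne) (by omega)
    · have h1 : (⇑G.next)^[b - a] ((⇑G.next)^[a] (G.next d)) = (⇑G.next)^[b] (G.next d) := by
        rw [← Function.iterate_add_apply]; congr 1; omega
      rw [hab] at h1
      have h3 : (⇑G.next)^[b] ((⇑G.next)^[b - a] (G.next d)) = (⇑G.next)^[b] (G.next d) := by
        rw [← Function.iterate_add_apply, Nat.add_comm, Function.iterate_add_apply, h1]
      have := Function.Injective.iterate G.next.injective b h3
      exact hmin (b - a) (by omega) (by omega) this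
  have hi' : (⇑G.next)^[i] d = (⇑G.next)^[i-1] (G.next d) := by
    rw [← Function.iterate_succ_apply]
    congr 1; omega
  have hj' : (⇑G.next)^[j] d = (⇑G.next)^[j-1] (G.next d) := by
    rw [← Function.iterate_succ_apply]
    congr 1; omega
  rw [hi', hj'] at h
  have := hinj (i-1) (j-1) (by omega) (by omega) h
  omega

/-! ### The index of a dart after the current rotor -/

/-- the position of `d` in the cyclic order strictly after the rotor at its base -/
noncomputable def iot (ρ : G.RotorConfig) (d : G.D) : ℕ :=
  Nat.find (exists_pos_iter G (ρ.1 (G.src d)) d (by rw [ρ.2]))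

lemma iot_pos (ρ : G.RotorConfig) (d : G.D) : 1 ≤ iot ρ d :=
  (Nat.find_spec (exists_pos_iter G (ρ.1 (G.src d)) d (by rw [ρ.2]))).1

lemma iot_spec (ρ : G.RotorConfig) (d : G.D) :
    (⇑G.next)^[iot ρ d] (ρ.1 (G.src d)) = d :=
  (Nat.find_spec (exists_pos_iter G (ρ.1 (G.src d)) d (by rw [ρ.2]))).2

lemma iot_min (ρ : G.RotorConfig) (d : G.D) (k : ℕ) (h1 : 1 ≤ k)
    (h2 : (⇑G.next)^[k] (ρ.1 (G.src d)) = d) : iot ρ d ≤ k :=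
  Nat.find_min' _ ⟨h1, h2⟩

lemma iot_le_degd (ρ : G.RotorConfig) (d : G.D) : iot ρ d ≤ degd G (G.src d) := by
  have hsrc : G.src (ρ.1 (G.src d)) = G.src d := ρ.2 _
  obtain ⟨k, hk1, hk2⟩ := exists_pos_iter G (ρ.1 (G.src d)) d (by rw [ρ.2])
  have hdeg := iterate_degd G (ρ.1 (G.src d))
  rw [hsrc] at hdeg
  rcases Nat.lt_or_ge k (degd G (G.src d)) with h | h
  · exact le_trans (iot_min ρ d k hk1 hk2) (le_of_lt h)
  · set p := degd G (G.src d) with hp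
    have hppos : 0 < p := by
      have := degd_pos G d; omega
    rcases Nat.eq_zero_or_pos (k % p) with h0 | h0
    · have hfix : (⇑G.next)^[p * (k / p)] (ρ.1 (G.src d)) = ρ.1 (G.src d) :=
        iterate_period_mul _ p _ hdeg _
      have hd : d = ρ.1 (G.src d) := by
        have heq : p * (k / p) = k := by
          have := Nat.div_add_mod k p; omega
        rw [heq] at hfix
        rw [← hfix]
        exact hk2.symm
      have hiter : (⇑G.next)^[p] (ρ.1 (G.src d)) = d := by rw [hdeg]; exact hd.symm
      exact iot_min ρ d p hppos hiter
    · have heq : k % p + p * (k / p) = k := by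
        have := Nat.div_add_mod k p; omega
      rw [← heq, Function.iterate_add_apply, iterate_period_mul _ p _ hdeg] at hk2
      exact le_trans (iot_min ρ d _ h0 hk2) (le_of_lt (Nat.mod_lt _ hppos))

lemma iot_rotor (ρ : G.RotorConfig) (u : G.V) : iot ρ (ρ.1 u) = degd G u := by
  have hsrc : G.src (ρ.1 u) = u := ρ.2 u
  have h1 : iot ρ (ρ.1 u) ≤ degd G u := by
    have := iot_le_degd ρ (ρ.1 u); rwa [hsrc] at this
  rcases Nat.lt_or_ge (iot ρ (ρ.1 u)) (degd G u) with h | h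
  · exfalso
    have hspec := iot_spec ρ (ρ.1 u)
    rw [hsrc] at hspec
    have hdeg : (⇑G.next)^[degd G u] (ρ.1 u) = ρ.1 u := by
      have := iterate_degd G (ρ.1 u); rwa [hsrc] at this
    have := iter_inj_Icc G (ρ.1 u) (iot ρ (ρ.1 u)) (degd G u)
      (iot_pos ρ (ρ.1 u)) (by rw [hsrc]; omega)
      (by have := degd_pos G (ρ.1 u); rw [hsrc] at *; omega)
      (by rw [hsrc]) (by rw [hspec, hdeg])
    omega
  · omega

/-! ### The realization lemma for rotor walks -/

/-- multiplicity with which a dart is traversed when its source fires `o (src d)` times -/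
def multt (ρ : G.RotorConfig) (o : G.V → ℕ) (d : G.D) : ℕ :=
  ((Finset.Icc 1 (o (G.src d))).filter
    (fun k => (⇑G.next)^[k] (ρ.1 (G.src d)) = d)).card

/-- total flow into a vertex -/
def inflow (ρ : G.RotorConfig) (o : G.V → ℕ) (u : G.V) : ℕ :=
  ∑ d : G.D, if G.tgt d = u then multt ρ o d else 0

lemma multt_pos (ρ : G.RotorConfig) (o : G.V → ℕ) (d : G.D)
    (h : 1 ≤ o (G.src d)) (hd : (⇑G.next)^[o (G.src d)] (ρ.1 (G.src d)) = d) :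
    1 ≤ multt ρ o d := by
  rw [multt]
  exact Finset.card_pos.2 ⟨o (G.src d), by
    simp only [Finset.mem_filter, Finset.mem_Icc, hd, and_true]
    omega⟩

lemma inflow_ge (ρ : G.RotorConfig) (o : G.V → ℕ) (d : G.D) :
    multt ρ o d ≤ inflow ρ o (G.tgt d) := by
  rw [inflow]
  have h0 : (if G.tgt d = G.tgt d then multt ρ o d else 0) = multt ρ o d := by simp
  rw [← h0]
  exact Finset.single_le_sum (f := fun e => if G.tgt e = G.tgt d then multt ρ o e else 0)
    (fun e _ => by positivity) (Finset.mem_univ d)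

/-- key lemma: a flow-conserving odometer whose final rotors lead back to the
target vertex is realized exactly by the rotor walk. -/
lemma walk_realize (G : RibbonGraph) : ∀ (N : ℕ) (ρ : G.RotorConfig) (a v : G.V)
    (o : G.V → ℕ) (τ : G.V → G.D),
    (∑ u, o u) = N →
    (∀ u, τ u = (⇑G.next)^[o u] (ρ.1 u)) →
    (∀ u, inflow ρ o u + (if u = a then 1 else 0) = o u + (if u = v then 1 else 0)) →
    (∀ u, ∃ n, (fun w => G.tgt (τ w))^[n] u = v) →
    ∀ (σ : G.RotorConfig), σ.1 = τ → (G.rrStep)^[N] (ρ, a) = (σ, v) := by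
  intro N
  induction N with
  | zero =>
    intro ρ a v o τ hsum hτ hflow hreach σ hστ
    have ho : ∀ u, o u = 0 := by
      intro u
      have := (Finset.sum_eq_zero_iff (s := (Finset.univ : Finset G.V)) (f := o)).1 hsum
      exact this u (Finset.mem_univ u)
    have hin : ∀ u, inflow ρ o u = 0 := by
      intro u
      rw [inflow]
      apply Finset.sum_eq_zero
      intro d _
      have hm : multt ρ o d = 0 := by
        rw [multt, ho]
        simp
      simp [hm]
    have hav : a = v := by
      have h1 := hflow a
      rw [hin, ho] at h1
      by_cases h2 : a = v
      · exact h2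
      · exfalso
        rw [if_pos rfl, if_neg h2] at h1
        omega
    have hσρ : σ = ρ := by
      apply Subtype.ext
      rw [hστ]
      funext u
      rw [hτ, ho]
      rfl
    rw [Function.iterate_zero_apply, hσρ, hav]
  | succ N ih =>
    intro ρ a v o τ hsum hτ hflow hreach σ hστ
    -- the chip can move: o a ≥ 1
    have hoa : 1 ≤ o a := by
      by_contra hoa0'
      have hoa0 : o a = 0 := by omega
      have hav : a = v ∧ inflow ρ o a = 0 := by
        have h1 := hflow a
        rw [hoa0, if_pos rfl] at h1
        by_cases h2 : a = v
        · rw [if_pos h2] at h1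
          exact ⟨h2, by omega⟩
        · exfalso
          rw [if_neg h2] at h1
          omega
      -- propagate positivity of o along τ-paths to v
      have key : ∀ n u, 1 ≤ o u → (fun w => G.tgt (τ w))^[n] u = v → 1 ≤ o v := by
        intro n
        induction n with
        | zero =>
          intro u hu he
          rw [Function.iterate_zero_apply] at he
          exact he ▸ hu
        | succ n ihn =>
          intro u hu he
          have hsrcτ : G.src (τ u) = u := by rw [hτ, src_iter, ρ.2]
          have hmult : 1 ≤ multt ρ o (τ u) := by
            apply multt_pos
            · rw [hsrcτ]; exact hu
            · rw [hsrcτ, ← hτ]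
          have hinW : 1 ≤ inflow ρ o (G.tgt (τ u)) := le_trans hmult (inflow_ge ρ o (τ u))
          by_cases hwv : G.tgt (τ u) = v
          · have h1 := hflow v
            rw [hwv] at hinW
            rw [if_pos hav.1.symm, if_pos rfl] at h1
            omega
          · have how : 1 ≤ o (G.tgt (τ u)) := by
              have h1 := hflow (G.tgt (τ u))
              rw [if_neg hwv] at h1
              split_ifs at h1 <;> omega
            have he' : (fun w => G.tgt (τ w))^[n] (G.tgt (τ u)) = v := by
              rw [Function.iterate_succ_apply] at he
              exact he
            exact ihn (G.tgt (τ u)) how he'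
      have hex : ∃ u, 1 ≤ o u := by
        by_contra hno
        push_neg at hno
        have h0 : ∀ u, o u = 0 := fun u => by have := hno u; omega
        have : (∑ u, o u) = 0 := Finset.sum_eq_zero (fun u _ => h0 u)
        omega
      obtain ⟨u₀, hu₀⟩ := hex
      obtain ⟨n, hn⟩ := hreach u₀
      have hv1 := key n u₀ hu₀ hn
      rw [← hav.1] at hv1
      omega
    -- perform one step
    set a₁ := G.tgt (G.next (ρ.1 a)) with ha₁
    set ρ₁ := (G.rrStep (ρ, a)).1 with hρ₁
    have hρ₁val : ∀ w, ρ₁.1 w = if w = a then G.next (ρ.1 a) else ρ.1 w := fun w => rfl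
    have hstep : G.rrStep (ρ, a) = (ρ₁, a₁) := rfl
    set o₁ : G.V → ℕ := fun w => if w = a then o a - 1 else o w with ho₁
    have ho₁val : ∀ w, o₁ w = if w = a then o a - 1 else o w := fun w => rfl
    have hsum₁ : (∑ u, o₁ u) = N := by
      have h1 : o₁ a + ∑ u ∈ Finset.univ.erase a, o₁ u = ∑ u, o₁ u :=
        Finset.add_sum_erase _ o₁ (Finset.mem_univ a)
      have h2 : o a + ∑ u ∈ Finset.univ.erase a, o u = ∑ u, o u :=
        Finset.add_sum_erase _ o (Finset.mem_univ a)
      have h3 : ∑ u ∈ Finset.univ.erase a, o₁ u = ∑ u ∈ Finset.univ.erase a, o u :=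
        Finset.sum_congr rfl (fun u hu => by
          rw [ho₁val, if_neg (Finset.ne_of_mem_erase hu)])
      have h4 : o₁ a = o a - 1 := by rw [ho₁val, if_pos rfl]
      omega
    have hτ₁ : ∀ u, τ u = (⇑G.next)^[o₁ u] (ρ₁.1 u) := by
      intro u
      rw [ho₁val, hρ₁val]
      by_cases h : u = a
      · subst h
        rw [if_pos rfl, if_pos rfl, hτ, ← Function.iterate_succ_apply]
        congr 1
        omega
      · rw [if_neg h, if_neg h, hτ]
    -- multiplicity bookkeeping
    have hmultd : ∀ d, multt ρ o d =
        multt ρ₁ o₁ d + (if d = G.next (ρ.1 a) then 1 else 0) := by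
      intro d
      by_cases hsd : G.src d = a
      · have e1 : o₁ (G.src d) = o a - 1 := by rw [ho₁val, hsd, if_pos rfl]
        have e2 : ρ₁.1 (G.src d) = G.next (ρ.1 a) := by rw [hρ₁val, hsd, if_pos rfl]
        rw [multt, multt, e1, e2, hsd]
        have hIcc : Finset.Icc 1 (o a) = insert 1 ((Finset.Icc 1 (o a - 1)).image (· + 1)) := by
          ext k
          simp only [Finset.mem_Icc, Finset.mem_insert, Finset.mem_image]
          constructor
          · intro ⟨hk1, hk2⟩
            rcases Nat.eq_or_lt_of_le hk1 with h | h
            · left; omega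
            · right; exact ⟨k - 1, ⟨by omega, by omega⟩, by omega⟩
          · rintro (rfl | ⟨m, ⟨hm1, hm2⟩, rfl⟩)
            · omega
            · omega
        rw [hIcc, Finset.filter_insert]
        have hnotmem : (1 : ℕ) ∉ (Finset.Icc 1 (o a - 1)).image (· + 1) := by
          simp only [Finset.mem_image, Finset.mem_Icc]
          rintro ⟨m, ⟨hm1, _⟩, hm⟩
          omega
        have himg : ((Finset.Icc 1 (o a - 1)).image (· + 1)).filter
            (fun k => (⇑G.next)^[k] (ρ.1 a) = d) =
            ((Finset.Icc 1 (o a - 1)).filter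
              (fun k => (⇑G.next)^[k] (G.next (ρ.1 a)) = d)).image (· + 1) := by
          rw [Finset.filter_image]
          congr 1
        by_cases hone : (⇑G.next)^[1] (ρ.1 a) = d
        · have hd : d = G.next (ρ.1 a) := by rw [← hone]; rfl
          have hnm : (1:ℕ) ∉ ((Finset.Icc 1 (o a - 1)).image (· + 1)).filter
              (fun k => (⇑G.next)^[k] (ρ.1 a) = d) :=
            fun hmem => hnotmem (Finset.mem_of_mem_filter 1 hmem)
          rw [if_pos hone, Finset.card_insert_of_notMem hnm, himg,
            Finset.card_image_of_injective _ (fun x y h => by omega), if_pos hd]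
        · have hd : d ≠ G.next (ρ.1 a) := fun hd => hone (by rw [hd]; rfl)
          rw [if_neg hone, himg,
            Finset.card_image_of_injective _ (fun x y h => by omega), if_neg hd]
          omega
      · have e1 : o₁ (G.src d) = o (G.src d) := by rw [ho₁val, if_neg hsd]
        have e2 : ρ₁.1 (G.src d) = ρ.1 (G.src d) := by rw [hρ₁val, if_neg hsd]
        have e3 : d ≠ G.next (ρ.1 a) := by
          intro hd
          apply hsd
          rw [hd, G.src_next, ρ.2]
        rw [multt, multt, e1, e2, if_neg e3]
        omega
    have hinflow : ∀ u, inflow ρ o u = inflow ρ₁ o₁ u + (if u = a₁ then 1 else 0) := by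
      intro u
      rw [inflow, inflow]
      have hterm : ∀ d : G.D, (if G.tgt d = u then multt ρ o d else 0) =
          (if G.tgt d = u then multt ρ₁ o₁ d else 0) +
          (if d = G.next (ρ.1 a) ∧ G.tgt d = u then 1 else 0) := by
        intro d
        by_cases htd : G.tgt d = u
        · rw [if_pos htd, if_pos htd, hmultd d]
          by_cases hd : d = G.next (ρ.1 a)
          · rw [if_pos hd, if_pos ⟨hd, htd⟩]
          · rw [if_neg hd, if_neg (by rintro ⟨h, -⟩; exact hd h)]
        · rw [if_neg htd, if_neg htd, if_neg (by rintro ⟨-, h⟩; exact htd h)]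
      rw [Finset.sum_congr rfl (fun d _ => hterm d), Finset.sum_add_distrib]
      congr 1
      have hsplit : ∀ d : G.D, (if d = G.next (ρ.1 a) ∧ G.tgt d = u then 1 else 0) =
          (if d = G.next (ρ.1 a) then (if G.tgt d = u then 1 else 0) else 0) := by
        intro d; rw [ite_and]
      rw [Finset.sum_congr rfl (fun d _ => hsplit d), Finset.sum_ite_eq' Finset.univ
        (G.next (ρ.1 a)) (fun d => if G.tgt d = u then 1 else 0)]
      simp only [Finset.mem_univ, if_true]
      by_cases h : G.tgt (G.next (ρ.1 a)) = u
      · rw [if_pos h, if_pos (show u = a₁ from h.symm)]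
      · rw [if_neg h, if_neg (show ¬ u = a₁ from fun hh => h hh.symm)]
    have hflow₁ : ∀ u, inflow ρ₁ o₁ u + (if u = a₁ then 1 else 0) =
        o₁ u + (if u = v then 1 else 0) := by
      intro u
      have h1 := hflow u
      rw [hinflow u] at h1
      rw [ho₁val]
      by_cases hua : u = a
      · subst hua
        rw [if_pos rfl] at h1 ⊢
        split_ifs at h1 ⊢ <;> omega
      · rw [if_neg hua] at h1 ⊢
        split_ifs at h1 ⊢ <;> omega
    have hres := ih ρ₁ a₁ v o₁ τ hsum₁ hτ₁ hflow₁ hreach σ hστ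
    rw [Function.iterate_succ_apply, hstep, hres]


/-! ### Structure of the cycle of a rotor configuration -/

section Cycle

variable (C : G.DirCycle) (ρ : G.RotorConfig)

lemma len_pos : 0 < C.darts.length := List.length_pos_iff.2 C.ne

lemma len_ge_two : 2 ≤ C.darts.length := by
  have h1 : 0 < C.darts.length := len_pos C
  by_contra h
  have hl : C.darts.length = 1 := by omega
  have h2 := C.wrap
  rw [List.getLast_eq_getElem, List.head_eq_getElem_zero] at h2
  have h3 : C.darts.length - 1 = 0 := by omega
  simp only [h3] at h2
  exact G.no_loop _ h2

/-- the `i`-th vertex of the cycle (indices mod length) -/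
def vtx (i : ℕ) : G.V :=
  G.src (C.darts.get ⟨i % C.darts.length, Nat.mod_lt _ (len_pos C)⟩)

lemma get_eq_of_eq {α : Type*} {l : List α} {i j : ℕ} (hi : i < l.length) (hj : j < l.length)
    (h : i = j) : l.get ⟨i, hi⟩ = l.get ⟨j, hj⟩ := by subst h; rfl

lemma vtx_congr {i j : ℕ} (h : i % C.darts.length = j % C.darts.length) :
    vtx C i = vtx C j := by
  unfold vtx
  congr 1
  exact get_eq_of_eq _ _ h

lemma vtx_mem (i : ℕ) : vtx C i ∈ G.cverts C := by
  rw [cverts]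
  exact List.mem_map.2 ⟨_, List.get_mem _ _, rfl⟩

lemma vtx_surj (u : G.V) (hu : u ∈ G.cverts C) : ∃ i, vtx C i = u := by
  rw [cverts] at hu
  obtain ⟨d, hd, hdu⟩ := List.mem_map.1 hu
  obtain ⟨i, hi⟩ := List.mem_iff_get.1 hd
  refine ⟨i.1, ?_⟩
  rw [vtx, ← hdu, ← hi]
  congr 1
  exact get_eq_of_eq _ _ (Nat.mod_eq_of_lt i.2)

variable (hcyc : G.IsCycleOf ρ C)
include hcyc

lemma rotor_vtx (i : ℕ) :
    ρ.1 (vtx C i) = C.darts.get ⟨i % C.darts.length, Nat.mod_lt _ (len_pos C)⟩ :=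
  hcyc.1 _ (List.get_mem _ _)

lemma rotor_mem (u : G.V) (hu : u ∈ G.cverts C) : ρ.1 u ∈ C.darts := by
  obtain ⟨i, rfl⟩ := vtx_surj C u hu
  rw [rotor_vtx C ρ hcyc]
  exact List.get_mem _ _

lemma cstep (i : ℕ) : G.cfgStep ρ (vtx C i) = vtx C (i + 1) := by
  set n := C.darts.length with hn
  have hn2 : 2 ≤ n := len_ge_two C
  have hlt : i % n < n := Nat.mod_lt _ (len_pos C)
  show G.tgt (ρ.1 (vtx C i)) = _
  rw [rotor_vtx C ρ hcyc]
  by_cases h2 : i % n + 1 < n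
  · have h3 : (i + 1) % n = i % n + 1 := by
      rw [Nat.add_mod, Nat.mod_eq_of_lt (show 1 < n by omega), Nat.mod_eq_of_lt h2]
    have h4 : G.tgt (C.darts.get ⟨i % n, hlt⟩) = G.src (C.darts.get ⟨i % n + 1, by omega⟩) :=
      List.isChain_iff_getElem.1 C.chain (i % n) (by omega)
    rw [h4, vtx]
    congr 1
    exact get_eq_of_eq _ _ h3.symm
  · have h5 : i % n + 1 = n := by omega
    have h3 : (i + 1) % n = 0 := by
      rw [Nat.add_mod, Nat.mod_eq_of_lt (show 1 < n by omega)]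
      rw [h5, Nat.mod_self]
    have hlast : C.darts.getLast C.ne = C.darts.get ⟨i % n, hlt⟩ := by
      rw [List.getLast_eq_getElem, List.get_eq_getElem]
      congr 1
      show C.darts.length - 1 = i % n
      omega
    have hhead : C.darts.head C.ne = C.darts.get ⟨(i + 1) % n, Nat.mod_lt _ (len_pos C)⟩ := by
      rw [List.head_eq_getElem_zero, List.get_eq_getElem]
      congr 1
      show 0 = (i + 1) % n
      omega
    have h6 := C.wrap
    rw [hlast, hhead] at h6
    exact h6

lemma vtx_iterate (k i : ℕ) : (G.cfgStep ρ)^[k] (vtx C i) = vtx C (i + k) := by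
  induction k with
  | zero => rfl
  | succ m ih =>
    rw [Function.iterate_succ_apply', ih, cstep C ρ hcyc, Nat.add_assoc]

lemma periodic_iff (u : G.V) : G.Periodic ρ u ↔ u ∈ G.cverts C := by
  constructor
  · exact hcyc.2 u
  · intro hu
    obtain ⟨i, rfl⟩ := vtx_surj C u hu
    refine ⟨C.darts.length, len_pos C, ?_⟩
    rw [vtx_iterate C ρ hcyc]
    exact vtx_congr C (Nat.add_mod_right _ _)

lemma reach_cverts (u w : G.V) (hu : u ∈ G.cverts C) (hw : w ∈ G.cverts C) :
    ∃ n, (G.cfgStep ρ)^[n] u = w := by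
  obtain ⟨i, rfl⟩ := vtx_surj C u hu
  obtain ⟨j, rfl⟩ := vtx_surj C w hw
  set n := C.darts.length with hn
  refine ⟨(j + n) - (i % n), ?_⟩
  rw [vtx_iterate C ρ hcyc]
  apply vtx_congr
  have hr : i % n < n := Nat.mod_lt _ (len_pos C)
  have hi := Nat.div_add_mod i n
  set t := n * (i / n) with ht
  have h1 : i + ((j + n) - (i % n)) = t + n + j := by omega
  rw [h1]
  have h2 : t + n + j = n * (i / n + 1) + j := by rw [Nat.mul_succ]
  rw [h2, Nat.mul_add_mod]

/-- the previous vertex along the cycle -/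
def prevv (u : G.V) : G.V := (G.cfgStep ρ)^[C.darts.length - 1] u

/-- the cycle dart entering a cycle vertex -/
def ecyc (u : G.V) : G.D := ρ.1 (prevv C ρ u)

lemma prevv_vtx (i : ℕ) : prevv C ρ (vtx C i) = vtx C (i + (C.darts.length - 1)) := by
  rw [prevv, vtx_iterate C ρ hcyc]

lemma prevv_mem (u : G.V) (hu : u ∈ G.cverts C) : prevv C ρ u ∈ G.cverts C := by
  obtain ⟨i, rfl⟩ := vtx_surj C u hu
  rw [prevv_vtx C ρ hcyc]
  exact vtx_mem C _

lemma cfg_prevv (u : G.V) (hu : u ∈ G.cverts C) : G.cfgStep ρ (prevv C ρ u) = u := by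
  obtain ⟨i, rfl⟩ := vtx_surj C u hu
  rw [prevv_vtx C ρ hcyc, cstep C ρ hcyc]
  apply vtx_congr
  have h2 : 2 ≤ C.darts.length := len_ge_two C
  have h1 : i + (C.darts.length - 1) + 1 = i + C.darts.length := by omega
  rw [h1, Nat.add_mod_right]

lemma prevv_cfg (u : G.V) (hu : u ∈ G.cverts C) : prevv C ρ (G.cfgStep ρ u) = u := by
  obtain ⟨i, rfl⟩ := vtx_surj C u hu
  rw [cstep C ρ hcyc, prevv_vtx C ρ hcyc]
  apply vtx_congr
  have h2 : 2 ≤ C.darts.length := len_ge_two C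
  have h1 : i + 1 + (C.darts.length - 1) = i + C.darts.length := by omega
  rw [h1, Nat.add_mod_right]

lemma tgt_ecyc (u : G.V) (hu : u ∈ G.cverts C) : G.tgt (ecyc C ρ u) = u :=
  cfg_prevv C ρ hcyc u hu

lemma src_ecyc (u : G.V) : G.src (ecyc C ρ u) = prevv C ρ u := ρ.2 _

lemma ecyc_mem (u : G.V) (hu : u ∈ G.cverts C) : ecyc C ρ u ∈ C.darts :=
  rotor_mem C ρ hcyc _ (prevv_mem C ρ hcyc u hu)

lemma ecyc_cfg (u : G.V) (hu : u ∈ G.cverts C) : ecyc C ρ (G.cfgStep ρ u) = ρ.1 u := by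
  rw [ecyc, prevv_cfg C ρ hcyc u hu]

/-- number of steps to rotate from the cycle rotor to the reversed entering dart -/
noncomputable def rr (u : G.V) : ℕ := iot ρ (G.rev (ecyc C ρ u))

lemma src_rev_ecyc (u : G.V) (hu : u ∈ G.cverts C) :
    G.src (G.rev (ecyc C ρ u)) = u := tgt_ecyc C ρ hcyc u hu

lemma rr_pos (u : G.V) : 1 ≤ rr C ρ u := iot_pos ρ _

lemma rr_spec (u : G.V) (hu : u ∈ G.cverts C) :
    (⇑G.next)^[rr C ρ u] (ρ.1 u) = G.rev (ecyc C ρ u) := by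
  have h := iot_spec ρ (G.rev (ecyc C ρ u))
  rwa [src_rev_ecyc C ρ hcyc u hu] at h

lemma rr_min (u : G.V) (hu : u ∈ G.cverts C) (k : ℕ) (h1 : 1 ≤ k)
    (h2 : (⇑G.next)^[k] (ρ.1 u) = G.rev (ecyc C ρ u)) : rr C ρ u ≤ k := by
  refine iot_min ρ _ k h1 ?_
  rwa [src_rev_ecyc C ρ hcyc u hu]

lemma rr_le_degd (u : G.V) (hu : u ∈ G.cverts C) : rr C ρ u ≤ degd G u := by
  have h := iot_le_degd ρ (G.rev (ecyc C ρ u))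
  rwa [src_rev_ecyc C ρ hcyc u hu] at h

/-- a dart at a cycle vertex whose index is `rr` is the reversed entering dart -/
lemma iot_eq_rr (u : G.V) (hu : u ∈ G.cverts C) (d : G.D) (hd : G.src d = u)
    (h : iot ρ d = rr C ρ u) : d = G.rev (ecyc C ρ u) := by
  have h1 := iot_spec ρ d
  rw [hd, h] at h1
  rw [← h1, rr_spec C ρ hcyc u hu]

end Cycle


/-! ### Separation: trails on the right of the cycle -/

section Separation

variable (C : G.DirCycle) (ρ : G.RotorConfig)

/-- a trail from the right side of the cycle out to a vertex off the cycle -/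
def CoTrail (s : List G.D) (u : G.V) : Prop :=
  ∃ hs : s ≠ [],
    s.Chain' (fun a b => G.tgt a = G.src b) ∧
    G.src (s.head hs) = u ∧
    u ∉ G.cverts C ∧
    G.tgt (s.getLast hs) ∈ G.cverts C ∧
    iot ρ (G.rev (s.getLast hs)) < rr C ρ (G.tgt (s.getLast hs)) ∧
    (∀ i : Fin s.length, (i : ℕ) < s.length - 1 → G.tgt (s.get i) ∉ G.cverts C) ∧
    (∀ i j : Fin s.length, i ≠ j → s.get i ≠ s.get j ∧ s.get i ≠ G.rev (s.get j))

/-- vertices on the right side of the cycle -/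
def RV (u : G.V) : Prop := ∃ s, CoTrail C ρ s u

lemma rv_not_cverts {u : G.V} (h : RV C ρ u) : u ∉ G.cverts C := by
  obtain ⟨s, -, -, -, hu, -⟩ := h
  exact hu

lemma cotrail_src {s : List G.D} {u : G.V} (h : CoTrail C ρ s u) (i : Fin s.length) :
    G.src (s.get i) ∉ G.cverts C := by
  obtain ⟨hs, hchain, hhead, hu, -, -, hint, -⟩ := h
  rcases i with ⟨i, hi⟩
  cases i with
  | zero =>
    have h0 : s.get ⟨0, hi⟩ = s.head hs := by
      rw [List.head_eq_getElem_zero, List.get_eq_getElem]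
    rw [h0, hhead]; exact hu
  | succ k =>
    have hc : G.tgt (s.get ⟨k, by omega⟩) = G.src (s.get ⟨k + 1, hi⟩) :=
      List.isChain_iff_getElem.1 hchain k (by omega)
    rw [← hc]
    exact hint ⟨k, by omega⟩ (show k < s.length - 1 by omega)

lemma cotrail_drop {s : List G.D} {u : G.V} (h : CoTrail C ρ s u) (n : ℕ)
    (hn : n < s.length) :
    CoTrail C ρ (s.drop n) (G.src (s.get ⟨n, hn⟩)) := by
  obtain ⟨hs, hchain, hhead, hu, hlast, hliot, hint, hinj⟩ := h
  have hlen : (s.drop n).length = s.length - n := List.length_drop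
  have hne : s.drop n ≠ [] := by
    intro he
    have := congrArg List.length he
    rw [hlen] at this
    simp at this
    omega
  have hget : ∀ (i : ℕ) (hi : i < (s.drop n).length),
      (s.drop n).get ⟨i, hi⟩ = s.get ⟨n + i, by omega⟩ := by
    intro i hi
    rw [List.get_eq_getElem, List.get_eq_getElem, List.getElem_drop]
  have hgl : (s.drop n).getLast hne = s.getLast hs := by
    rw [List.getLast_eq_getElem, List.getLast_eq_getElem]
    have h1 : (s.drop n)[(s.drop n).length - 1] =
        s.get ⟨n + ((s.drop n).length - 1), by omega⟩ := hget _ (by omega)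
    rw [h1, List.get_eq_getElem]
    congr 1
    show n + ((s.drop n).length - 1) = s.length - 1
    omega
  have hhd : (s.drop n).head hne = s.get ⟨n, hn⟩ := by
    rw [List.head_eq_getElem_zero]
    have h1 : (s.drop n)[0] = s.get ⟨n + 0, by omega⟩ := hget 0 (by omega)
    rw [h1]
    exact get_eq_of_eq _ _ (by omega)
  refine ⟨hne, hchain.drop n, by rw [hhd], ?_, by rw [hgl]; exact hlast,
    by rw [hgl]; exact hliot, ?_, ?_⟩
  · exact cotrail_src C ρ ⟨hs, hchain, hhead, hu, hlast, hliot, hint, hinj⟩ ⟨n, hn⟩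
  · intro i hi
    rw [hget i.1 i.2]
    exact hint ⟨n + i.1, by omega⟩ (show n + i.1 < s.length - 1 by omega)
  · intro i j hij
    rw [hget i.1 i.2, hget j.1 j.2]
    refine hinj ⟨n + i.1, by omega⟩ ⟨n + j.1, by omega⟩ ?_
    intro he
    apply hij
    have h1 : n + i.1 = n + j.1 := congrArg Fin.val he
    exact Fin.ext (by omega)

lemma rv_base (d : G.D) (h1 : G.src d ∈ G.cverts C) (h2 : iot ρ d < rr C ρ (G.src d))
    (h3 : G.tgt d ∉ G.cverts C) : RV C ρ (G.tgt d) := by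
  refine ⟨[G.rev d], List.cons_ne_nil _ _, List.isChain_singleton _, rfl, h3, ?_, ?_, ?_, ?_⟩
  · show G.src (G.rev (G.rev d)) ∈ _
    rw [G.rev_rev]; exact h1
  · show iot ρ (G.rev (G.rev d)) < rr C ρ (G.src (G.rev (G.rev d)))
    rw [G.rev_rev]; exact h2
  · intro i hi
    simp at hi
  · intro i j hij
    exfalso
    apply hij
    apply Fin.ext
    have hi := i.2
    have hj := j.2
    simp only [List.length_cons, List.length_nil] at hi hj
    omega

lemma rv_closure (d : G.D) (hRV : RV C ρ (G.src d)) (h : G.tgt d ∉ G.cverts C) :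
    RV C ρ (G.tgt d) := by
  obtain ⟨s, hs⟩ := hRV
  obtain ⟨hne, hchain, hhead, hu, hlast, hliot, hint, hinj⟩ := hs
  have hs' : CoTrail C ρ s (G.src d) := ⟨hne, hchain, hhead, hu, hlast, hliot, hint, hinj⟩
  by_cases hmem : ∃ i : Fin s.length, s.get i = d ∨ s.get i = G.rev d
  · obtain ⟨⟨i, hi⟩, hcase⟩ := hmem
    rcases hcase with hc | hc
    · by_cases h2 : i + 1 < s.length
      · have hdrop := cotrail_drop C ρ hs' (i + 1) h2
        have hc2 : G.src (s.get ⟨i + 1, h2⟩) = G.tgt d := by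
          have hcc : G.tgt (s.get ⟨i, hi⟩) = G.src (s.get ⟨i + 1, h2⟩) :=
            List.isChain_iff_getElem.1 hchain i (by omega)
          rw [← hcc, hc]
        rw [hc2] at hdrop
        exact ⟨_, hdrop⟩
      · exfalso
        have hil : s.getLast hne = s.get ⟨i, hi⟩ := by
          rw [List.getLast_eq_getElem]
          have h1 : s[s.length - 1] = s.get ⟨s.length - 1, by omega⟩ := rfl
          rw [h1]
          exact get_eq_of_eq _ _ (by omega)
        rw [hil, hc] at hlast
        exact h hlast
    · have hdrop := cotrail_drop C ρ hs' i hi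
      have hc2 : G.src (s.get ⟨i, hi⟩) = G.tgt d := by rw [hc]; rfl
      rw [hc2] at hdrop
      exact ⟨_, hdrop⟩
  · push_neg at hmem
    have hslen : 0 < s.length := List.length_pos_iff.2 hne
    have hlc : (G.rev d :: s).length = s.length + 1 := by simp
    have hhd0 : s.head hne = s.get ⟨0, hslen⟩ := by
      rw [List.head_eq_getElem_zero]; rfl
    have hrevne : ∀ (k : ℕ) (hk : k < s.length),
        G.rev d ≠ s.get ⟨k, hk⟩ ∧ G.rev d ≠ G.rev (s.get ⟨k, hk⟩) := by
      intro k hk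
      constructor
      · intro he
        exact (hmem ⟨k, hk⟩).2 he.symm
      · intro he
        have h2 : d = s.get ⟨k, hk⟩ := by
          have h3 := congrArg G.rev he
          rwa [G.rev_rev, G.rev_rev] at h3
        exact (hmem ⟨k, hk⟩).1 h2.symm
    refine ⟨G.rev d :: s, List.cons_ne_nil _ _, ?_, rfl, h, ?_, ?_, ?_, ?_⟩
    · refine List.isChain_iff_getElem.2 ?_
      intro i hi
      simp only [List.length_cons] at hi
      cases i with
      | zero =>
        show G.tgt (G.rev d) = G.src (s.get ⟨0, hslen⟩)
        rw [← hhd0, hhead]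
        show G.src (G.rev (G.rev d)) = G.src d
        rw [G.rev_rev]
      | succ k =>
        show G.tgt (s.get ⟨k, by omega⟩) = G.src (s.get ⟨k + 1, by omega⟩)
        exact List.isChain_iff_getElem.1 hchain k (by omega)
    · rw [List.getLast_cons hne]; exact hlast
    · rw [List.getLast_cons hne]; exact hliot
    · rintro ⟨i, hilt⟩ hi
      have hi2 : i < (G.rev d :: s).length - 1 := hi
      rw [hlc] at hi2
      cases i with
      | zero =>
        show G.src (G.rev (G.rev d)) ∉ G.cverts C
        rw [G.rev_rev, ← hhead, hhd0]
        exact cotrail_src C ρ hs' ⟨0, hslen⟩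
      | succ k =>
        show G.tgt (s.get ⟨k, by omega⟩) ∉ G.cverts C
        exact hint ⟨k, by omega⟩ (show k < s.length - 1 by omega)
    · rintro ⟨i, hilt⟩ ⟨j, hjlt⟩ hij
      have hine : i ≠ j := fun he => hij (Fin.ext he)
      have hilt2 : i < s.length + 1 := by rw [← hlc]; exact hilt
      have hjlt2 : j < s.length + 1 := by rw [← hlc]; exact hjlt
      cases i with
      | zero =>
        cases j with
        | zero => exact absurd rfl hine
        | succ l =>
          have hl' : l < s.length := by omega
          show G.rev d ≠ s.get ⟨l, hl'⟩ ∧ G.rev d ≠ G.rev (s.get ⟨l, hl'⟩)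
          exact hrevne l hl'
      | succ k =>
        have hk' : k < s.length := by omega
        cases j with
        | zero =>
          show s.get ⟨k, hk'⟩ ≠ G.rev d ∧ s.get ⟨k, hk'⟩ ≠ G.rev (G.rev d)
          constructor
          · exact fun he => (hrevne k hk').1 he.symm
          · rw [G.rev_rev]
            exact (hmem ⟨k, hk'⟩).1
        | succ l =>
          have hl' : l < s.length := by omega
          show s.get ⟨k, hk'⟩ ≠ s.get ⟨l, hl'⟩ ∧ s.get ⟨k, hk'⟩ ≠ G.rev (s.get ⟨l, hl'⟩)
          exact hinj ⟨k, hk'⟩ ⟨l, hl'⟩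
            (fun he => hine (by simpa using congrArg Fin.val he))

end Separation


lemma iot_lt_degd_of_ne (ρ : G.RotorConfig) (d : G.D) (h : d ≠ ρ.1 (G.src d)) :
    iot ρ d < degd G (G.src d) := by
  have hle := iot_le_degd ρ d
  rcases Nat.lt_or_ge (iot ρ d) (degd G (G.src d)) with h1 | h1
  · exact h1
  · exfalso
    apply h
    have heq : iot ρ d = degd G (G.src d) := by omega
    have h3 := iot_spec ρ d
    rw [heq] at h3
    have h4 : (⇑G.next)^[degd G (G.src d)] (ρ.1 (G.src d)) = ρ.1 (G.src d) := by
      have h5 := iterate_degd G (ρ.1 (G.src d))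
      rwa [ρ.2] at h5
    exact h3.symm.trans h4

section Witness

variable (C : G.DirCycle) (ρ : G.RotorConfig) (hcyc : G.IsCycleOf ρ C)
include hcyc

lemma cfg_mem (u : G.V) (hu : u ∈ G.cverts C) : G.cfgStep ρ u ∈ G.cverts C := by
  obtain ⟨i, rfl⟩ := vtx_surj C u hu
  rw [cstep C ρ hcyc]
  exact vtx_mem C _

lemma right_intro (u : G.V) (hu : u ∈ G.cverts C) (d : G.D) (hd : G.src d = u)
    (h2 : iot ρ d < rr C ρ u) : G.RightOf C d := by
  refine ⟨ρ.1 u, rotor_mem C ρ hcyc u hu, ecyc C ρ u, ecyc_mem C ρ hcyc u hu,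
    by rw [ρ.2, hd], by rw [tgt_ecyc C ρ hcyc u hu, hd],
    iot ρ d, rr C ρ u, iot_pos ρ d, h2, ?_, rr_spec C ρ hcyc u hu, ?_⟩
  · have h3 := iot_spec ρ d
    rwa [hd] at h3
  · intro j' hj1 hj2 hj3
    exact absurd (rr_min C ρ hcyc u hu j' hj1 hj3) (by omega)

lemma left_intro (u : G.V) (hu : u ∈ G.cverts C) (d : G.D) (hd : G.src d = u)
    (h1 : rr C ρ u < iot ρ d) (h2 : iot ρ d < degd G u) : G.LeftOf C d := by
  have hrr := rr_spec C ρ hcyc u hu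
  have hdeg : (⇑G.next)^[degd G u] (ρ.1 u) = ρ.1 u := by
    have h3 := iterate_degd G (ρ.1 u)
    rwa [ρ.2] at h3
  have hrle := rr_le_degd C ρ hcyc u hu
  refine ⟨ρ.1 u, rotor_mem C ρ hcyc u hu, ecyc C ρ u, ecyc_mem C ρ hcyc u hu,
    by rw [ρ.2, hd], by rw [tgt_ecyc C ρ hcyc u hu, hd],
    iot ρ d - rr C ρ u, degd G u - rr C ρ u, by omega, by omega, ?_, ?_, ?_⟩
  · rw [← hrr, ← Function.iterate_add_apply]
    have h3 : iot ρ d - rr C ρ u + rr C ρ u = iot ρ d := by omega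
    rw [h3]
    have h4 := iot_spec ρ d
    rwa [hd] at h4
  · rw [← hrr, ← Function.iterate_add_apply]
    have h3 : degd G u - rr C ρ u + rr C ρ u = degd G u := by omega
    rw [h3, hdeg]
  · intro j' hj1 hj2 hj3
    rw [← hrr, ← Function.iterate_add_apply] at hj3
    have h4 : iot ρ (ρ.1 u) ≤ j' + rr C ρ u :=
      iot_min ρ (ρ.1 u) (j' + rr C ρ u) (by omega) (by rw [ρ.2]; exact hj3)
    rw [iot_rotor] at h4
    omega

lemma no_left_right (hsep : G.Separating C) (d : G.D)
    (h1 : G.src d ∈ G.cverts C) (h2 : G.tgt d ∈ G.cverts C)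
    (hR : iot ρ d < rr C ρ (G.src d))
    (hL1 : rr C ρ (G.tgt d) < iot ρ (G.rev d))
    (hL2 : iot ρ (G.rev d) < degd G (G.tgt d)) : False := by
  apply hsep [G.rev d]
  refine ⟨List.cons_ne_nil _ _, List.isChain_singleton _, ?_, ?_, ?_, ?_, ?_, ?_⟩
  · exact h2
  · show G.src (G.rev (G.rev d)) ∈ _
    rw [G.rev_rev]; exact h1
  · intro i hi
    exfalso
    have h3 := i.2
    simp only [List.length_cons, List.length_nil] at h3
    exact hi (by omega)
  · intro i j hij
    exfalso
    apply hij
    apply Fin.ext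
    have h3 := i.2
    have h4 := j.2
    simp only [List.length_cons, List.length_nil] at h3 h4
    omega
  · exact left_intro C ρ hcyc (G.tgt d) h2 (G.rev d) rfl hL1 hL2
  · show G.RightOf C (G.rev (G.rev d))
    rw [G.rev_rev]
    exact right_intro C ρ hcyc (G.src d) h1 d rfl hR

lemma rv_exit (hsep : G.Separating C) (u : G.V) (hRV : RV C ρ u) (δ : G.D)
    (hsrc : G.src δ = u) (htgt : G.tgt δ ∈ G.cverts C) :
    iot ρ (G.rev δ) ≤ rr C ρ (G.tgt δ) := by
  by_contra hgt
  push_neg at hgt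
  obtain ⟨s, hsfull⟩ := hRV
  obtain ⟨hne, hchain, hhead, hu, hlast, hliot, hint, hinj⟩ := hsfull
  have hs' : CoTrail C ρ s u := ⟨hne, hchain, hhead, hu, hlast, hliot, hint, hinj⟩
  have hslen : 0 < s.length := List.length_pos_iff.2 hne
  have hnerot : G.rev δ ≠ ρ.1 (G.tgt δ) := by
    intro he
    have h1 : G.tgt (G.rev δ) = u := by
      show G.src (G.rev (G.rev δ)) = u
      rw [G.rev_rev, hsrc]
    have h2 : G.tgt (ρ.1 (G.tgt δ)) ∈ G.cverts C := cfg_mem C ρ hcyc _ htgt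
    rw [← he, h1] at h2
    exact hu h2
  have hioLT : iot ρ (G.rev δ) < degd G (G.tgt δ) :=
    iot_lt_degd_of_ne ρ (G.rev δ) hnerot
  apply hsep (G.rev δ :: s)
  have hlc : (G.rev δ :: s).length = s.length + 1 := by simp
  have hhd0 : s.head hne = s.get ⟨0, hslen⟩ := by
    rw [List.head_eq_getElem_zero]; rfl
  refine ⟨List.cons_ne_nil _ _, ?_, ?_, ?_, ?_, ?_, ?_, ?_⟩
  · refine List.isChain_iff_getElem.2 ?_
    intro i hi
    simp only [List.length_cons] at hi
    cases i with
    | zero =>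
      show G.tgt (G.rev δ) = G.src (s.get ⟨0, hslen⟩)
      rw [← hhd0, hhead]
      show G.src (G.rev (G.rev δ)) = u
      rw [G.rev_rev, hsrc]
    | succ k =>
      show G.tgt (s.get ⟨k, by omega⟩) = G.src (s.get ⟨k + 1, by omega⟩)
      exact List.isChain_iff_getElem.1 hchain k (by omega)
  · exact htgt
  · rw [List.getLast_cons hne]; exact hlast
  · rintro ⟨i, hilt⟩ hi0
    cases i with
    | zero => exact absurd rfl hi0
    | succ k =>
      have hk' : k < s.length := by
        have h3 := hilt
        rw [hlc] at h3
        omega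
      show G.src (s.get ⟨k, hk'⟩) ∉ G.cverts C
      exact cotrail_src C ρ hs' ⟨k, hk'⟩
  · rintro ⟨i, hilt⟩ ⟨j, hjlt⟩ hij
    have hine : i ≠ j := fun he => hij (Fin.ext he)
    have hilt2 : i < s.length + 1 := by rw [← hlc]; exact hilt
    have hjlt2 : j < s.length + 1 := by rw [← hlc]; exact hjlt
    have hkey : ∀ (k : ℕ) (hk : k < s.length),
        G.rev δ ≠ s.get ⟨k, hk⟩ ∧ G.rev δ ≠ G.rev (s.get ⟨k, hk⟩) := by
      intro k hk
      constructor
      · intro he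
        have h1 := cotrail_src C ρ hs' ⟨k, hk⟩
        rw [← he] at h1
        exact h1 htgt
      · intro he
        have hd2 : δ = s.get ⟨k, hk⟩ := by
          have h3 := congrArg G.rev he
          rwa [G.rev_rev, G.rev_rev] at h3
        by_cases hkl : k < s.length - 1
        · exact (hint ⟨k, hk⟩ hkl) (by rw [← hd2]; exact htgt)
        · have hgl : s.getLast hne = s.get ⟨k, hk⟩ := by
            rw [List.getLast_eq_getElem]
            have h1 : s[s.length - 1] = s.get ⟨s.length - 1, by omega⟩ := rfl
            rw [h1]
            exact get_eq_of_eq _ _ (by omega)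
          rw [hgl, ← hd2] at hliot
          omega
    cases i with
    | zero =>
      cases j with
      | zero => exact absurd rfl hine
      | succ l =>
        have hl' : l < s.length := by omega
        show G.rev δ ≠ s.get ⟨l, hl'⟩ ∧ G.rev δ ≠ G.rev (s.get ⟨l, hl'⟩)
        exact hkey l hl'
    | succ k =>
      have hk' : k < s.length := by omega
      cases j with
      | zero =>
        show s.get ⟨k, hk'⟩ ≠ G.rev δ ∧ s.get ⟨k, hk'⟩ ≠ G.rev (G.rev δ)
        constructor
        · exact fun he => (hkey k hk').1 he.symm
        · rw [G.rev_rev]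
          intro he
          exact (hkey k hk').2 (congrArg G.rev he.symm)
      | succ l =>
        have hl' : l < s.length := by omega
        show s.get ⟨k, hk'⟩ ≠ s.get ⟨l, hl'⟩ ∧ s.get ⟨k, hk'⟩ ≠ G.rev (s.get ⟨l, hl'⟩)
        exact hinj ⟨k, hk'⟩ ⟨l, hl'⟩
          (fun he => hine (by simpa using congrArg Fin.val he))
  · exact left_intro C ρ hcyc (G.tgt δ) htgt (G.rev δ) rfl hgt hioLT
  · show G.RightOf C (G.rev ((G.rev δ :: s).getLast (List.cons_ne_nil _ _)))
    rw [List.getLast_cons hne]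
    exact right_intro C ρ hcyc (G.tgt (s.getLast hne)) hlast (G.rev (s.getLast hne)) rfl hliot

end Witness


lemma src_rev (G : RibbonGraph) (d : G.D) : G.src (G.rev d) = G.tgt d := rfl

lemma tgt_rev (G : RibbonGraph) (d : G.D) : G.tgt (G.rev d) = G.src d := by
  show G.src (G.rev (G.rev d)) = G.src d
  rw [G.rev_rev]

section Flow

attribute [local instance] Classical.propDecidable

variable (C : G.DirCycle) (ρ : G.RotorConfig)

/-- the odometer of the cycle-reversal process -/
noncomputable def odo : G.V → ℕ := fun u =>
  if u ∈ G.cverts C then rr C ρ u else if RV C ρ u then degd G u else 0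

/-- the traversed darts -/
def Td (d : G.D) : Prop :=
  (G.src d ∈ G.cverts C ∧ iot ρ d ≤ rr C ρ (G.src d)) ∨ RV C ρ (G.src d)

lemma count_window (u : G.V) (m : ℕ) (hm : m ≤ degd G u) (d : G.D) (hsd : G.src d = u) :
    ((Finset.Icc 1 m).filter (fun k => (⇑G.next)^[k] (ρ.1 u) = d)).card
      = if iot ρ d ≤ m then 1 else 0 := by
  have hspec : (⇑G.next)^[iot ρ d] (ρ.1 u) = d := by
    have h := iot_spec ρ d
    rwa [hsd] at h
  have hdg : degd G (G.src (ρ.1 u)) = degd G u := by rw [ρ.2]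
  by_cases hio : iot ρ d ≤ m
  · rw [if_pos hio]
    have hset : (Finset.Icc 1 m).filter (fun k => (⇑G.next)^[k] (ρ.1 u) = d)
        = {iot ρ d} := by
      ext k
      simp only [Finset.mem_filter, Finset.mem_Icc, Finset.mem_singleton]
      constructor
      · rintro ⟨⟨hk1, hk2⟩, hk3⟩
        exact iter_inj_Icc G (ρ.1 u) k (iot ρ d) hk1 (by rw [hdg]; omega)
          (iot_pos ρ d) (by rw [hdg]; omega) (hk3.trans hspec.symm)
      · rintro rfl
        exact ⟨⟨iot_pos ρ d, hio⟩, hspec⟩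
    rw [hset, Finset.card_singleton]
  · rw [if_neg hio, Finset.card_eq_zero, Finset.filter_eq_empty_iff]
    intro k hk
    rw [Finset.mem_Icc] at hk
    intro hk3
    have h4 := iot_min ρ d k hk.1 (by rw [hsd]; exact hk3)
    omega

variable (hcyc : G.IsCycleOf ρ C)
include hcyc

lemma multt_eq (d : G.D) :
    multt ρ (odo C ρ) d = if Td C ρ d then 1 else 0 := by
  rw [multt]
  by_cases h1 : G.src d ∈ G.cverts C
  · have ho : odo C ρ (G.src d) = rr C ρ (G.src d) := by
      simp only [odo]; rw [if_pos h1]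
    rw [ho, count_window ρ (G.src d) _ (rr_le_degd C ρ hcyc _ h1) d rfl]
    by_cases h2 : iot ρ d ≤ rr C ρ (G.src d)
    · have hTd : Td C ρ d := Or.inl ⟨h1, h2⟩
      rw [if_pos h2, if_pos hTd]
    · have hTd : ¬ Td C ρ d := by
        rintro (⟨-, h3⟩ | h3)
        · exact h2 h3
        · exact rv_not_cverts C ρ h3 h1
      rw [if_neg h2, if_neg hTd]
  · by_cases hrv : RV C ρ (G.src d)
    · have ho : odo C ρ (G.src d) = degd G (G.src d) := by
        simp only [odo]; rw [if_neg h1, if_pos hrv]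
      have hTd : Td C ρ d := Or.inr hrv
      rw [ho, count_window ρ (G.src d) _ le_rfl d rfl,
        if_pos (iot_le_degd ρ d), if_pos hTd]
    · have ho : odo C ρ (G.src d) = 0 := by
        simp only [odo]; rw [if_neg h1, if_neg hrv]
      have hTd : ¬ Td C ρ d := by
        rintro (⟨h3, -⟩ | h3)
        · exact h1 h3
        · exact hrv h3
      rw [ho, if_neg hTd]
      have hIcc : Finset.Icc 1 0 = (∅ : Finset ℕ) := rfl
      rw [hIcc, Finset.filter_empty, Finset.card_empty]

lemma inflow_eq (u : G.V) :
    inflow ρ (odo C ρ) u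
      = (Finset.univ.filter (fun d => G.tgt d = u ∧ Td C ρ d)).card := by
  rw [inflow, Finset.card_filter]
  apply Finset.sum_congr rfl
  intro d _
  rw [multt_eq C ρ hcyc d, ite_and]

lemma out_eq (u : G.V) :
    odo C ρ u = (Finset.univ.filter (fun d => G.src d = u ∧ Td C ρ d)).card := by
  by_cases h1 : u ∈ G.cverts C
  · have ho : odo C ρ u = rr C ρ u := by simp only [odo]; rw [if_pos h1]
    rw [ho]
    have hrle := rr_le_degd C ρ hcyc u h1
    have hset : Finset.univ.filter (fun d => G.src d = u ∧ Td C ρ d)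
        = (Finset.Icc 1 (rr C ρ u)).image (fun k => (⇑G.next)^[k] (ρ.1 u)) := by
      ext d
      simp only [Finset.mem_filter, Finset.mem_univ, true_and, Finset.mem_image,
        Finset.mem_Icc]
      constructor
      · rintro ⟨hsd, hTd⟩
        have hio : iot ρ d ≤ rr C ρ u := by
          rcases hTd with ⟨-, h2⟩ | h2
          · rwa [hsd] at h2
          · exact absurd h1 (by rw [← hsd]; exact rv_not_cverts C ρ h2)
        refine ⟨iot ρ d, ⟨iot_pos ρ d, hio⟩, ?_⟩
        have h3 := iot_spec ρ d
        rwa [hsd] at h3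
      · rintro ⟨k, ⟨hk1, hk2⟩, rfl⟩
        have hsd : G.src ((⇑G.next)^[k] (ρ.1 u)) = u := by rw [src_iter, ρ.2]
        refine ⟨hsd, Or.inl ⟨by rwa [hsd], ?_⟩⟩
        rw [hsd]
        exact le_trans (iot_min ρ _ k hk1 (by rw [hsd])) hk2
    have hinj2 : Set.InjOn (fun k => (⇑G.next)^[k] (ρ.1 u))
        ((Finset.Icc 1 (rr C ρ u)) : Finset ℕ) := by
      intro i hi j hj hij
      simp only [Finset.coe_Icc, Set.mem_Icc] at hi hj
      exact iter_inj_Icc G (ρ.1 u) i j hi.1 (by rw [ρ.2]; omega) hj.1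
        (by rw [ρ.2]; omega) hij
    rw [hset, Finset.card_image_of_injOn hinj2, Nat.card_Icc]
    omega
  · by_cases hrv : RV C ρ u
    · have ho : odo C ρ u = degd G u := by
        simp only [odo]; rw [if_neg h1, if_pos hrv]
      rw [ho, degd]
      congr 1
      ext d
      simp only [Finset.mem_filter, Finset.mem_univ, true_and]
      constructor
      · intro hsd
        exact ⟨hsd, Or.inr (by rwa [hsd])⟩
      · rintro ⟨hsd, -⟩
        exact hsd
    · have ho : odo C ρ u = 0 := by
        simp only [odo]; rw [if_neg h1, if_neg hrv]
      rw [ho]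
      symm
      rw [Finset.card_eq_zero, Finset.filter_eq_empty_iff]
      intro d _
      rintro ⟨hsd, hTd⟩
      rcases hTd with ⟨h2, -⟩ | h2
      · exact h1 (hsd ▸ h2)
      · exact hrv (hsd ▸ h2)

lemma td_rv_of_tgt (d : G.D) (hTd : Td C ρ d) (h : G.tgt d ∉ G.cverts C) :
    RV C ρ (G.tgt d) := by
  rcases hTd with ⟨h1, h2⟩ | h2
  · rcases Nat.lt_or_ge (iot ρ d) (rr C ρ (G.src d)) with h3 | h3
    · exact rv_base C ρ d h1 h3 h
    · exfalso
      have heq : iot ρ d = rr C ρ (G.src d) := by omega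
      have hd2 := iot_eq_rr C ρ hcyc (G.src d) h1 d rfl heq
      apply h
      rw [hd2, tgt_rev, src_ecyc C ρ hcyc]
      exact prevv_mem C ρ hcyc _ h1
  · exact rv_closure C ρ d h2 h

lemma td_of_into_rv (hsep : G.Separating C) (u : G.V) (hrv : RV C ρ u) (d : G.D)
    (htd : G.tgt d = u) : Td C ρ d := by
  by_cases h1 : G.src d ∈ G.cverts C
  · left
    refine ⟨h1, ?_⟩
    by_contra h2
    push_neg at h2
    have hsr : G.src (G.rev d) = u := by rw [src_rev, htd]
    have htr : G.tgt (G.rev d) = G.src d := tgt_rev G d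
    have h4 := rv_exit C ρ hcyc hsep u hrv (G.rev d) hsr (by rw [htr]; exact h1)
    rw [G.rev_rev, htr] at h4
    omega
  · right
    have hsr : G.src (G.rev d) = u := by rw [src_rev, htd]
    have htr : G.tgt (G.rev d) = G.src d := tgt_rev G d
    have h3 := rv_closure C ρ (G.rev d) (by rw [hsr]; exact hrv) (by rw [htr]; exact h1)
    rwa [htr] at h3

lemma in_eq_out (hsep : G.Separating C) (u : G.V) :
    (Finset.univ.filter (fun d => G.tgt d = u ∧ Td C ρ d)).card
      = (Finset.univ.filter (fun d => G.src d = u ∧ Td C ρ d)).card := by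
  by_cases h1 : u ∈ G.cverts C
  · set E := G.rev (ecyc C ρ u) with hE
    set R := G.rev (ρ.1 u) with hR
    have hsrcE : G.src E = u := src_rev_ecyc C ρ hcyc u h1
    have htgtR : G.tgt R = u := by rw [hR, tgt_rev, ρ.2]
    have hiotE : iot ρ E = rr C ρ u := rfl
    have hEOut : G.src E = u ∧ Td C ρ E :=
      ⟨hsrcE, Or.inl ⟨by rwa [hsrcE], by rw [hsrcE, hiotE]⟩⟩
    have hsrcR : G.src R = G.cfgStep ρ u := rfl
    have hRIn : G.tgt R = u ∧ Td C ρ R := by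
      refine ⟨htgtR, Or.inl ⟨?_, ?_⟩⟩
      · rw [hsrcR]
        exact cfg_mem C ρ hcyc u h1
      · rw [hsrcR]
        have hec : ecyc C ρ (G.cfgStep ρ u) = ρ.1 u := ecyc_cfg C ρ hcyc u h1
        show iot ρ R ≤ rr C ρ (G.cfgStep ρ u)
        rw [rr, hec]
    have hOutIn : ∀ d, G.src d = u → Td C ρ d → d ≠ E →
        (G.tgt (G.rev d) = u ∧ Td C ρ (G.rev d)) := by
      intro d hsd hTd hdE
      have hio : iot ρ d ≤ rr C ρ u := by
        rcases hTd with ⟨-, h2⟩ | h2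
        · rwa [hsd] at h2
        · exact absurd h1 (by rw [← hsd]; exact rv_not_cverts C ρ h2)
      have hiolt : iot ρ d < rr C ρ u := by
        rcases Nat.lt_or_ge (iot ρ d) (rr C ρ u) with h3 | h3
        · exact h3
        · exact absurd (iot_eq_rr C ρ hcyc u h1 d hsd (by omega)) hdE
      refine ⟨by rw [tgt_rev, hsd], ?_⟩
      by_cases hx : G.tgt d ∈ G.cverts C
      · left
        refine ⟨by rw [src_rev]; exact hx, ?_⟩
        rw [src_rev]
        by_contra h4
        push_neg at h4
        have hner : G.rev d ≠ ρ.1 (G.tgt d) := by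
          intro he
          apply hdE
          have h5 : d = G.rev (ρ.1 (G.tgt d)) := by
            rw [← he, G.rev_rev]
          have h6 : G.src (G.rev (ρ.1 (G.tgt d))) = G.cfgStep ρ (G.tgt d) := rfl
          have h7 : G.cfgStep ρ (G.tgt d) = u := by
            rw [← h6, ← h5, hsd]
          have h8 : prevv C ρ u = G.tgt d := by
            rw [← h7, prevv_cfg C ρ hcyc _ hx]
          rw [hE, ecyc, h8, ← h5]
        have hlt2 : iot ρ (G.rev d) < degd G (G.tgt d) := by
          have h5 := iot_lt_degd_of_ne ρ (G.rev d) (by rw [src_rev]; exact hner)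
          rwa [src_rev] at h5
        exact no_left_right C ρ hcyc hsep d (by rwa [hsd]) hx
          (by rwa [hsd]) h4 hlt2
      · right
        rw [src_rev]
        exact rv_base C ρ d (by rwa [hsd]) (by rwa [hsd]) hx
    have hInOut : ∀ g, G.tgt g = u → Td C ρ g → g ≠ R →
        (G.src (G.rev g) = u ∧ Td C ρ (G.rev g)) := by
      intro g htg hTd hgR
      refine ⟨by rw [src_rev, htg], ?_⟩
      left
      refine ⟨by rw [src_rev, htg]; exact h1, ?_⟩
      rw [src_rev, htg]
      rcases hTd with ⟨hy, hio⟩ | hrvy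
      · rcases Nat.lt_or_ge (iot ρ g) (rr C ρ (G.src g)) with h3 | h3
        · by_contra h4
          push_neg at h4
          have hner : G.rev g ≠ ρ.1 u := by
            intro he
            apply hgR
            rw [hR, ← he, G.rev_rev]
          have hlt2 : iot ρ (G.rev g) < degd G u := by
            have h5 := iot_lt_degd_of_ne ρ (G.rev g)
              (by rw [src_rev, htg]; exact hner)
            rwa [src_rev, htg] at h5
          exact no_left_right C ρ hcyc hsep g hy (by rw [htg]; exact h1) h3
            (by rw [htg]; exact h4) (by rw [htg]; exact hlt2)
        · exfalso
          apply hgR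
          have heq := iot_eq_rr C ρ hcyc (G.src g) hy g rfl (by omega)
          have h5 : G.tgt g = prevv C ρ (G.src g) := by
            conv_lhs => rw [heq]
            rw [tgt_rev, src_ecyc C ρ hcyc]
          have h6 : G.cfgStep ρ u = G.src g := by
            rw [← htg, h5]
            exact cfg_prevv C ρ hcyc _ hy
          rw [hR, heq]
          congr 1
          rw [← h6, ecyc_cfg C ρ hcyc u h1]
      · have h4 := rv_exit C ρ hcyc hsep (G.src g) hrvy g rfl (by rw [htg]; exact h1)
        rwa [htg] at h4
    have hgE : ∀ g, G.tgt g = u → Td C ρ g → g = ecyc C ρ u → g = R := by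
      intro g htg hTd hge
      have hsg : G.src g = prevv C ρ u := by rw [hge, src_ecyc C ρ hcyc]
      have hpm : prevv C ρ u ∈ G.cverts C := prevv_mem C ρ hcyc u h1
      have hio : iot ρ g ≤ rr C ρ (G.src g) := by
        rcases hTd with ⟨-, h2⟩ | h2
        · exact h2
        · exact absurd hpm (by rw [← hsg]; exact rv_not_cverts C ρ h2)
      have hiog : iot ρ g = degd G (prevv C ρ u) := by
        rw [hge]
        show iot ρ (ρ.1 (prevv C ρ u)) = _
        rw [iot_rotor]
      have hrle := rr_le_degd C ρ hcyc _ hpm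
      have hreq : rr C ρ (prevv C ρ u) = degd G (prevv C ρ u) := by
        rw [hsg] at hio
        omega
      have h5 : G.rev (ecyc C ρ (prevv C ρ u)) = ρ.1 (prevv C ρ u) := by
        have h6 := rr_spec C ρ hcyc _ hpm
        rw [hreq] at h6
        have h7 : (⇑G.next)^[degd G (prevv C ρ u)] (ρ.1 (prevv C ρ u))
            = ρ.1 (prevv C ρ u) := by
          have h8 := iterate_degd G (ρ.1 (prevv C ρ u))
          rwa [ρ.2] at h8
        rw [← h6, h7]
      have h9 : ecyc C ρ (prevv C ρ u) = G.rev (ρ.1 (prevv C ρ u)) := by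
        rw [← h5, G.rev_rev]
      have h10 : prevv C ρ (prevv C ρ u) = u := by
        have ha : G.src (ecyc C ρ (prevv C ρ u)) = prevv C ρ (prevv C ρ u) :=
          src_ecyc C ρ hcyc _
        have hb : G.src (G.rev (ρ.1 (prevv C ρ u))) = G.cfgStep ρ (prevv C ρ u) := rfl
        rw [h9, hb, cfg_prevv C ρ hcyc u h1] at ha
        exact ha.symm
      have h11 : ecyc C ρ (prevv C ρ u) = ρ.1 u := by
        show ρ.1 (prevv C ρ (prevv C ρ u)) = ρ.1 u
        rw [h10]
      have h12 : ρ.1 u = G.rev (ecyc C ρ u) := by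
        rw [← h11, h9]
        rfl
      rw [hge, hR, h12, G.rev_rev]
    have hdrot : ∀ d, G.src d = u → Td C ρ d → d = ρ.1 u → d = E := by
      intro d hsd hTd hdr
      have hio : iot ρ d ≤ rr C ρ u := by
        rcases hTd with ⟨-, h2⟩ | h2
        · rwa [hsd] at h2
        · exact absurd h1 (by rw [← hsd]; exact rv_not_cverts C ρ h2)
      have hiod : iot ρ d = degd G u := by rw [hdr, iot_rotor]
      have hrle := rr_le_degd C ρ hcyc u h1
      have hreq : rr C ρ u = degd G u := by omega
      have h6 := rr_spec C ρ hcyc u h1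
      rw [hreq] at h6
      have h7 : (⇑G.next)^[degd G u] (ρ.1 u) = ρ.1 u := by
        have h8 := iterate_degd G (ρ.1 u)
        rwa [ρ.2] at h8
      rw [hdr, hE, ← h6, h7]
    apply Finset.card_bij' (i := fun g _ => if g = R then E else G.rev g)
      (j := fun d _ => if d = E then R else G.rev d)
    · intro g hg
      rw [Finset.mem_filter] at hg ⊢
      obtain ⟨-, htg, hTd⟩ := hg
      by_cases hgR : g = R
      · rw [if_pos hgR]
        exact ⟨Finset.mem_univ _, hEOut⟩
      · rw [if_neg hgR]
        have h3 := hInOut g htg hTd hgR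
        exact ⟨Finset.mem_univ _, h3.1, h3.2⟩
    · intro d hd
      rw [Finset.mem_filter] at hd ⊢
      obtain ⟨-, hsd, hTd⟩ := hd
      by_cases hdE : d = E
      · rw [if_pos hdE]
        exact ⟨Finset.mem_univ _, hRIn⟩
      · rw [if_neg hdE]
        have h3 := hOutIn d hsd hTd hdE
        exact ⟨Finset.mem_univ _, h3.1, h3.2⟩
    · intro g hg
      rw [Finset.mem_filter] at hg
      obtain ⟨-, htg, hTd⟩ := hg
      by_cases hgR : g = R
      · rw [if_pos hgR, if_pos rfl, hgR]
      · rw [if_neg hgR]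
        by_cases hgE2 : G.rev g = E
        · exfalso
          apply hgR
          apply hgE g htg hTd
          have h3 := congrArg G.rev hgE2
          rwa [G.rev_rev, hE, G.rev_rev] at h3
        · rw [if_neg hgE2, G.rev_rev]
    · intro d hd
      rw [Finset.mem_filter] at hd
      obtain ⟨-, hsd, hTd⟩ := hd
      by_cases hdE : d = E
      · rw [if_pos hdE, if_pos rfl, hdE]
      · rw [if_neg hdE]
        by_cases hdR : G.rev d = R
        · exfalso
          apply hdE
          apply hdrot d hsd hTd
          have h3 := congrArg G.rev hdR
          rwa [G.rev_rev, hR, G.rev_rev] at h3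
        · rw [if_neg hdR, G.rev_rev]
  · by_cases hrv : RV C ρ u
    · apply Finset.card_bij' (i := fun g _ => G.rev g) (j := fun d _ => G.rev d)
      · intro g hg
        rw [Finset.mem_filter] at hg ⊢
        obtain ⟨-, htg, hTd⟩ := hg
        exact ⟨Finset.mem_univ _, by rw [src_rev, htg],
          Or.inr (by rw [src_rev, htg]; exact hrv)⟩
      · intro d hd
        rw [Finset.mem_filter] at hd ⊢
        obtain ⟨-, hsd, hTd⟩ := hd
        refine ⟨Finset.mem_univ _, by rw [tgt_rev, hsd], ?_⟩
        exact td_of_into_rv C ρ hcyc hsep u hrv (G.rev d) (by rw [tgt_rev, hsd])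
      · intro g _
        exact G.rev_rev g
      · intro d _
        exact G.rev_rev d
    · have hIn : Finset.univ.filter (fun d => G.tgt d = u ∧ Td C ρ d) = ∅ := by
        rw [Finset.filter_eq_empty_iff]
        intro d _
        rintro ⟨htd, hTd⟩
        have h3 := td_rv_of_tgt C ρ hcyc d hTd (by rwa [htd])
        rw [htd] at h3
        exact hrv h3
      have hOut : Finset.univ.filter (fun d => G.src d = u ∧ Td C ρ d) = ∅ := by
        rw [Finset.filter_eq_empty_iff]
        intro d _
        rintro ⟨hsd, hTd⟩
        rcases hTd with ⟨h2, -⟩ | h2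
        · exact h1 (hsd ▸ h2)
        · exact hrv (hsd ▸ h2)
      rw [hIn, hOut]

end Flow


section Assemble

attribute [local instance] Classical.propDecidable

variable (C : G.DirCycle) (ρ : G.RotorConfig) (hcyc : G.IsCycleOf ρ C)
include hcyc

lemma cyc_period (u : G.V) (hu : u ∈ G.cverts C) :
    (G.cfgStep ρ)^[C.darts.length] u = u := by
  obtain ⟨i, rfl⟩ := vtx_surj C u hu
  rw [vtx_iterate C ρ hcyc]
  exact vtx_congr C (Nat.add_mod_right _ _)

lemma sigma_eq (σ : G.RotorConfig) (hrev : G.IsReversal ρ σ) (u : G.V) :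
    σ.1 u = (⇑G.next)^[odo C ρ u] (ρ.1 u) := by
  by_cases h1 : u ∈ G.cverts C
  · have ho : odo C ρ u = rr C ρ u := by simp only [odo]; rw [if_pos h1]
    rw [ho, rr_spec C ρ hcyc u h1]
    have hpm : prevv C ρ u ∈ G.cverts C := prevv_mem C ρ hcyc u h1
    have hper : G.Periodic ρ (prevv C ρ u) := (periodic_iff C ρ hcyc _).2 hpm
    have h2 := hrev.2 _ hper
    have h3 : G.tgt (ρ.1 (prevv C ρ u)) = u := cfg_prevv C ρ hcyc u h1
    rw [h3] at h2
    exact h2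
  · have hnp : ¬ G.Periodic ρ u := fun hp => h1 ((periodic_iff C ρ hcyc u).1 hp)
    rw [hrev.1 u hnp]
    by_cases hrv : RV C ρ u
    · have ho : odo C ρ u = degd G u := by
        simp only [odo]; rw [if_neg h1, if_pos hrv]
      rw [ho]
      symm
      have h8 := iterate_degd G (ρ.1 u)
      rwa [ρ.2] at h8
    · have ho : odo C ρ u = 0 := by
        simp only [odo]; rw [if_neg h1, if_neg hrv]
      rw [ho]
      rfl

lemma sigma_reach (σ : G.RotorConfig)
    (hστ : ∀ u, σ.1 u = (⇑G.next)^[odo C ρ u] (ρ.1 u))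
    (v : G.V) (hv : v ∈ G.cverts C) (u : G.V) :
    ∃ n, (fun w => G.tgt (σ.1 w))^[n] u = v := by
  have hstep_off : ∀ w, w ∉ G.cverts C → G.tgt (σ.1 w) = G.cfgStep ρ w := by
    intro w hw
    rw [hστ w]
    by_cases hrv : RV C ρ w
    · have ho : odo C ρ w = degd G w := by
        simp only [odo]; rw [if_neg hw, if_pos hrv]
      rw [ho]
      have h8 := iterate_degd G (ρ.1 w)
      rw [ρ.2] at h8
      rw [h8]
      rfl
    · have ho : odo C ρ w = 0 := by
        simp only [odo]; rw [if_neg hw, if_neg hrv]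
      rw [ho]
      rfl
  have hstep_on : ∀ w, w ∈ G.cverts C → G.tgt (σ.1 w) = prevv C ρ w := by
    intro w hw
    rw [hστ w]
    have ho : odo C ρ w = rr C ρ w := by simp only [odo]; rw [if_pos hw]
    rw [ho, rr_spec C ρ hcyc w hw, tgt_rev]
    exact src_ecyc C ρ hcyc w
  have hphase1 : ∀ m w, (G.cfgStep ρ)^[m] w ∈ G.cverts C →
      ∃ n, (fun x => G.tgt (σ.1 x))^[n] w ∈ G.cverts C := by
    intro m
    induction m with
    | zero =>
      intro w hw
      exact ⟨0, hw⟩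
    | succ m ihm =>
      intro w hw
      by_cases h2 : w ∈ G.cverts C
      · exact ⟨0, h2⟩
      · rw [Function.iterate_succ_apply] at hw
        obtain ⟨n, hn⟩ := ihm (G.cfgStep ρ w) hw
        refine ⟨n + 1, ?_⟩
        rw [Function.iterate_succ_apply]
        show (fun x => G.tgt (σ.1 x))^[n] (G.tgt (σ.1 w)) ∈ _
        rw [hstep_off w h2]
        exact hn
  have hexm : ∀ w, ∃ m, (G.cfgStep ρ)^[m] w ∈ G.cverts C := by
    intro w
    obtain ⟨i, j, hij, he⟩ :=
      Finite.exists_ne_map_eq_of_infinite (fun n : ℕ => (G.cfgStep ρ)^[n] w)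
    rcases Nat.lt_or_ge i j with h3 | h3
    · refine ⟨i, hcyc.2 _ ⟨j - i, by omega, ?_⟩⟩
      rw [← Function.iterate_add_apply]
      rw [show j - i + i = j from by omega]
      exact he.symm
    · have h4 : j < i := by omega
      refine ⟨j, hcyc.2 _ ⟨i - j, by omega, ?_⟩⟩
      rw [← Function.iterate_add_apply]
      rw [show i - j + j = i from by omega]
      exact he
  have hFk : ∀ k x, x ∈ G.cverts C → (fun x => G.tgt (σ.1 x))^[k] x
      = (G.cfgStep ρ)^[k * (C.darts.length - 1)] x := by
    intro k
    induction k with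
    | zero =>
      intro x hx
      rw [Nat.zero_mul]
      rfl
    | succ k ihk =>
      intro x hx
      rw [Function.iterate_succ_apply]
      show (fun x => G.tgt (σ.1 x))^[k] (G.tgt (σ.1 x)) = _
      rw [hstep_on x hx, ihk _ (prevv_mem C ρ hcyc x hx), prevv,
        ← Function.iterate_add_apply]
      congr 1
      rw [Nat.succ_mul]
  have hphase2 : ∀ w, w ∈ G.cverts C →
      ∃ n, (fun x => G.tgt (σ.1 x))^[n] w = v := by
    intro w hw
    obtain ⟨m, hm⟩ := reach_cverts C ρ hcyc w v hw hv
    have hL2 : 2 ≤ C.darts.length := len_ge_two C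
    obtain ⟨M, hM⟩ : ∃ M, C.darts.length = M + 2 := ⟨C.darts.length - 2, by omega⟩
    refine ⟨m * (C.darts.length - 1), ?_⟩
    rw [hFk (m * (C.darts.length - 1)) w hw]
    have hq : m * (C.darts.length - 1) * (C.darts.length - 1)
        = C.darts.length * (m * M) + m := by
      have e1 : C.darts.length - 1 = M + 1 := by omega
      rw [e1, hM]
      ring
    rw [hq, Function.iterate_add_apply, hm,
      iterate_period_mul _ _ v (cyc_period C ρ hcyc v hv)]
  obtain ⟨m0, hm0⟩ := hexm u
  obtain ⟨n1, hn1⟩ := hphase1 m0 u hm0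
  obtain ⟨n2, hn2⟩ := hphase2 _ hn1
  refine ⟨n2 + n1, ?_⟩
  rw [Function.iterate_add_apply]
  exact hn2

end Assemble

end RRProof





/-- every separating cycle is reversible: if no path witnesses that
`C` is nonseparating, then from any unicycle with unique directed cycle `C` the
cycle-reversed configuration is reachable by rotor-routing. -/
theorem separating_reversible (G : RibbonGraph) (C : G.DirCycle)
    (hsep : G.Separating C) :
    ∀ (ρ : G.RotorConfig) (v : G.V) (σ : G.RotorConfig),
      G.IsCycleOf ρ C → v ∈ G.cverts C → G.IsReversal ρ σ →
        G.Reaches (ρ, v) (σ, v) := by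
  intro ρ v σ hcyc hv hrev
  classical
  have hστ : ∀ u, σ.1 u = (⇑G.next)^[RRProof.odo C ρ u] (ρ.1 u) :=
    RRProof.sigma_eq C ρ hcyc σ hrev
  have hflow : ∀ u, RRProof.inflow ρ (RRProof.odo C ρ) u + (if u = v then 1 else 0)
      = RRProof.odo C ρ u + (if u = v then 1 else 0) := by
    intro u
    rw [RRProof.inflow_eq C ρ hcyc u, RRProof.in_eq_out C ρ hcyc hsep u,
      ← RRProof.out_eq C ρ hcyc u]
  have hreach := RRProof.sigma_reach C ρ hcyc σ hστ v hv
  have hpos : 0 < ∑ u, RRProof.odo C ρ u := by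
    have h1 : RRProof.odo C ρ v = RRProof.rr C ρ v := by
      simp only [RRProof.odo]
      rw [if_pos hv]
    have h2 : 1 ≤ RRProof.odo C ρ v := by
      rw [h1]
      exact RRProof.rr_pos C ρ hcyc v
    calc 0 < RRProof.odo C ρ v := h2
    _ ≤ ∑ u, RRProof.odo C ρ u :=
      Finset.single_le_sum (fun u _ => Nat.zero_le _) (Finset.mem_univ v)
  exact ⟨∑ u, RRProof.odo C ρ u, hpos,
    RRProof.walk_realize G _ ρ v v (RRProof.odo C ρ) σ.1 rfl hστ hflow hreach σ rfl⟩
end
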